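/- arXiv:2101.11535 — 11 statements merged into one kernel-verified Lean document; each statement's English description precedes it below -/
import Mathlib

section
/- Let n = 2m, q = 2^m, and let F, G be quadratic functions over F_{2^n} with F(0) = G(0) = 0. Let a ∈ F_{2^n} with a + a^q ≠ 0, and define f(x) = a·Tr^n_m(F(x)) + a^q·Tr^n_m(G(x)), where Tr^n_m(x) = x + x^q. Then f is APN over F_{2^n} if and only if for every nonzero d ∈ F_{2^n}, the only solutions x ∈ F_{2^n} to the system { Δ_{d,F}(x) ∈ F_{2^m}, Δ_{d,G}(x) ∈ F_{2^m} } are x = 0 and x = 1, where Δ_{d,F}(x) := F(dx) + F(dx+d) + F(d) and similarly for G. -/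
theorem stmt_6 (m : ℕ) (hm : 0 < m) (F G : GaloisField 2 (2 * m) → GaloisField 2 (2 * m))
    (hF0 : F 0 = 0) (hG0 : G 0 = 0)
    (hFquad : ∀ a x y : GaloisField 2 (2 * m),
      F (x + y) + F (x + y + a) + F a + F 0 =
        (F x + F (x + a) + F a + F 0) + (F y + F (y + a) + F a + F 0))
    (hGquad : ∀ a x y : GaloisField 2 (2 * m),
      G (x + y) + G (x + y + a) + G a + G 0 =
        (G x + G (x + a) + G a + G 0) + (G y + G (y + a) + G a + G 0))
    (a : GaloisField 2 (2 * m)) (ha : a + a ^ (2 ^ m) ≠ 0)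
    (f : GaloisField 2 (2 * m) → GaloisField 2 (2 * m))
    (hf : ∀ x, f x = a * (F x + (F x) ^ (2 ^ m)) + a ^ (2 ^ m) * (G x + (G x) ^ (2 ^ m))) :
    (∀ d : GaloisField 2 (2 * m), d ≠ 0 → ∀ β : GaloisField 2 (2 * m),
        {x : GaloisField 2 (2 * m) | f x + f (x + d) = β}.ncard ≤ 2) ↔
      (∀ d : GaloisField 2 (2 * m), d ≠ 0 → ∀ x : GaloisField 2 (2 * m),
        ((F (d * x) + F (d * x + d) + F d) ^ (2 ^ m) = F (d * x) + F (d * x + d) + F d ∧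
         (G (d * x) + G (d * x + d) + G d) ^ (2 ^ m) = G (d * x) + G (d * x + d) + G d) →
        x = 0 ∨ x = 1) := by
  classical
  haveI : Fintype (GaloisField 2 (2 * m)) := Fintype.ofFinite _
  have hm2 : 2 * m ≠ 0 := by omega
  have hcard : Fintype.card (GaloisField 2 (2 * m)) = 2 ^ (2 * m) := by
    rw [← Nat.card_eq_fintype_card]; exact GaloisField.card 2 (2 * m) hm2
  have htwo : ∀ x : (GaloisField 2 (2 * m)), x + x = 0 := CharTwo.add_self_eq_zero
  have hcancel : ∀ u v : (GaloisField 2 (2 * m)), u + v = 0 → u = v := by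
    intro u v h
    linear_combination h - htwo v
  have hq0 : (2 : ℕ) ^ m ≠ 0 := by positivity
  have hadd : ∀ x y : (GaloisField 2 (2 * m)), (x + y) ^ (2 ^ m) = x ^ (2 ^ m) + y ^ (2 ^ m) := fun x y =>
    add_pow_char_pow ..
  have hqq : ∀ x : (GaloisField 2 (2 * m)), (x ^ 2 ^ m) ^ 2 ^ m = x := by
    intro x
    have h1 : (2 : ℕ) ^ m * 2 ^ m = 2 ^ (2 * m) := by rw [two_mul, pow_add]
    rw [← pow_mul, h1, ← hcard]
    exact FiniteField.pow_card x
  have hf0 : f 0 = 0 := by rw [hf, hF0, hG0, zero_pow hq0]; ring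
  have hDFadd : ∀ d x y : (GaloisField 2 (2 * m)), F (x + y) + F (x + y + d) + F d =
      (F x + F (x + d) + F d) + (F y + F (y + d) + F d) := by
    intro d x y
    have h := hFquad d x y
    rw [hF0] at h
    linear_combination h
  have hDGadd : ∀ d x y : (GaloisField 2 (2 * m)), G (x + y) + G (x + y + d) + G d =
      (G x + G (x + d) + G d) + (G y + G (y + d) + G d) := by
    intro d x y
    have h := hGquad d x y
    rw [hG0] at h
    linear_combination h
  have hL : ∀ d x : (GaloisField 2 (2 * m)), f x + f (x + d) + f d =
      a * ((F x + F (x + d) + F d) + (F x + F (x + d) + F d) ^ (2 ^ m)) +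
        a ^ (2 ^ m) * ((G x + G (x + d) + G d) + (G x + G (x + d) + G d) ^ (2 ^ m)) := by
    intro d x
    rw [hf x, hf (x + d), hf d]; simp only [hadd]
    ring
  have key : ∀ u v : (GaloisField 2 (2 * m)), u ^ (2 ^ m) = u → v ^ (2 ^ m) = v →
      a * u + a ^ (2 ^ m) * v = 0 → u = 0 ∧ v = 0 := by
    intro u v hu hv h
    have h2 : a ^ (2 ^ m) * u + a * v = 0 := by
      have h' := congrArg (· ^ (2 ^ m)) h
      simpa [hadd, mul_pow, hu, hv, hqq, zero_pow hq0] using h'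
    have huv : u = v := by
      have h3 : (a + a ^ (2 ^ m)) * (u + v) = 0 := by linear_combination h + h2
      rcases mul_eq_zero.1 h3 with h4 | h4
      · exact absurd h4 ha
      · exact hcancel u v h4
    have hu0 : u = 0 := by
      have h5 : (a + a ^ (2 ^ m)) * u = 0 := by linear_combination h + a ^ (2 ^ m) * huv
      rcases mul_eq_zero.1 h5 with h6 | h6
      · exact absurd h6 ha
      · exact h6
    exact ⟨hu0, huv ▸ hu0⟩
  have hTfix : ∀ y : (GaloisField 2 (2 * m)), (y + y ^ (2 ^ m)) ^ (2 ^ m) = y + y ^ (2 ^ m) := by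
    intro y
    simp only [hadd, hqq]
    ring
  have hker : ∀ d x : (GaloisField 2 (2 * m)), f x + f (x + d) + f d = 0 ↔
      ((F x + F (x + d) + F d) ^ (2 ^ m) = F x + F (x + d) + F d ∧
       (G x + G (x + d) + G d) ^ (2 ^ m) = G x + G (x + d) + G d) := by
    intro d x
    constructor
    · intro h
      rw [hL] at h
      obtain ⟨h1, h2⟩ := key _ _ (hTfix _) (hTfix _) h
      exact ⟨(hcancel _ _ h1).symm, (hcancel _ _ h2).symm⟩
    · rintro ⟨h1, h2⟩
      rw [hL, h1, h2, htwo, htwo]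
      ring
  have hLadd : ∀ d x y : (GaloisField 2 (2 * m)), f (x + y) + f (x + y + d) + f d =
      (f x + f (x + d) + f d) + (f y + f (y + d) + f d) := by
    intro d x y
    rw [hL d (x + y), hL d x, hL d y, hDFadd d x y, hDGadd d x y]; simp only [hadd]
    ring
  constructor
  · intro hAPN d hd x hx
    have h0 : f (d * x) + f (d * x + d) + f d = 0 := (hker d (d * x)).2 hx
    by_contra hcon
    push_neg at hcon
    obtain ⟨hx0, hx1⟩ := hcon
    have hy0 : d * x ≠ 0 := mul_ne_zero hd hx0
    have hyd : d ≠ d * x := by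
      intro h
      exact hx1 (mul_left_cancel₀ hd ((mul_one d).trans h)).symm
    have hsub : ({0, d, d * x} : Set (GaloisField 2 (2 * m))) ⊆ {z : (GaloisField 2 (2 * m)) | f z + f (z + d) = f d} := by
      intro z hz
      simp only [Set.mem_insert_iff, Set.mem_singleton_iff] at hz
      rcases hz with rfl | rfl | rfl
      · simp only [Set.mem_setOf_eq]
        rw [hf0, zero_add, zero_add]
      · simp only [Set.mem_setOf_eq]
        rw [htwo, hf0, add_zero]
      · exact hcancel _ _ h0
    have h3 : ({0, d, d * x} : Set (GaloisField 2 (2 * m))).ncard = 3 :=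
      Set.ncard_eq_three.2 ⟨0, d, d * x, Ne.symm hd, Ne.symm hy0, hyd, rfl⟩
    have h4 := Set.ncard_le_ncard hsub (Set.toFinite _)
    have h5 := hAPN d hd (f d)
    omega
  · intro hR d hd β
    by_cases hS : {x : (GaloisField 2 (2 * m)) | f x + f (x + d) = β} = ∅
    · rw [hS]; simp
    · obtain ⟨x0, hx0⟩ := Set.nonempty_iff_ne_empty.2 hS
      have hsub : {x : (GaloisField 2 (2 * m)) | f x + f (x + d) = β} ⊆ {x0, x0 + d} := by
        intro x hx
        have hx' : f x + f (x + d) = β := hx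
        have hx0' : f x0 + f (x0 + d) = β := hx0
        have hL0 : f (x + x0) + f (x + x0 + d) + f d = 0 := by
          rw [hLadd d x x0]
          linear_combination hx' + hx0' + htwo (β + f d)
        have hk := (hker d (x + x0)).1 hL0
        have harg : d * (d⁻¹ * (x + x0)) = x + x0 := by field_simp
        have hres := hR d hd (d⁻¹ * (x + x0)) (by rw [harg]; exact hk)
        rcases hres with h | h
        · left
          have hz : x + x0 = 0 := by rw [← harg, h, mul_zero]
          exact hcancel _ _ hz
        · right
          have hz : x + x0 = d := by rw [← harg, h, mul_one]
          show x = x0 + d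
          linear_combination hz - htwo x0
      refine le_trans (Set.ncard_le_ncard hsub (Set.toFinite _)) ?_
      exact le_trans (Set.ncard_insert_le _ _) (by simp)
end

section
/- Let n = 2m with m odd and q = 2^m. If c ∈ F_{2^n} satisfies c^3·(c + c^2 + c^4)^q ∈ F_{2^m}, then c is a cube in F_{2^n}. -/
theorem stmt_7 (m : ℕ) (hm : 0 < m) (hodd : Odd m) (c : GaloisField 2 (2 * m))
    (h : (c ^ 3 * (c + c ^ 2 + c ^ 4) ^ (2 ^ m)) ^ (2 ^ m) =
          c ^ 3 * (c + c ^ 2 + c ^ 4) ^ (2 ^ m)) :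
    ∃ β : GaloisField 2 (2 * m), β ^ 3 = c := by
  have h2m : 2 * m ≠ 0 := by omega
  haveI : Fintype (GaloisField 2 (2 * m)) := Fintype.ofFinite _
  have hcard : Fintype.card (GaloisField 2 (2 * m)) = 2 ^ (2 * m) := by
    rw [← Nat.card_eq_fintype_card]
    exact GaloisField.card 2 (2 * m) h2m
  set q : ℕ := 2 ^ m with hqdef
  have hq1 : 1 ≤ q := Nat.one_le_two_pow
  have h2 : (2 : GaloisField 2 (2 * m)) = 0 := by
    have : ((2 : ℕ) : GaloisField 2 (2 * m)) = 0 := CharP.cast_eq_zero _ 2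
    simpa using this
  obtain ⟨k, hk⟩ := hodd
  have h3dvd : 3 ∣ 2 * q - 1 := by
    have h4 : 2 * q = 4 ^ (k + 1) := by
      rw [hqdef, hk, show (4:ℕ) = 2^2 by norm_num, ← pow_mul]
      ring
    rw [h4]
    have := Nat.sub_dvd_pow_sub_pow 4 1 (k+1)
    simpa using this
  have hqq : ∀ x : GaloisField 2 (2 * m), (x ^ q) ^ q = x := by
    intro x
    rw [← pow_mul]
    have hqqm : q * q = 2 ^ (2 * m) := by rw [hqdef, ← pow_add]; ring_nf
    rw [hqqm, ← hcard]
    exact FiniteField.pow_card x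
  have hfrob : ∀ x y : GaloisField 2 (2 * m), (x + y) ^ q = x ^ q + y ^ q := by
    intro x y
    exact add_pow_char_pow x y 2 m
  have hcube : ∀ a : GaloisField 2 (2 * m), a ^ q = a → ∃ γ : GaloisField 2 (2 * m), γ ^ 3 = a := by
    intro a ha
    by_cases ha0 : a = 0
    · exact ⟨0, by rw [ha0]; ring⟩
    · refine ⟨a ^ ((2 * q - 1) / 3), ?_⟩
      rw [← pow_mul, Nat.div_mul_cancel h3dvd]
      have key : a ^ (2 * q - 1) * a = a * a := by
        rw [← pow_succ, show 2 * q - 1 + 1 = q + q by omega, pow_add, ha]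
      exact mul_right_cancel₀ ha0 key
  by_cases hc0 : c = 0
  · exact ⟨0, by rw [hc0]; ring⟩
  by_cases hfix : c ^ q = c
  · exact hcube c hfix
  -- main case
  have htq : (c + c ^ 2 + c ^ 4) ^ q = c ^ q + (c ^ q) ^ 2 + (c ^ q) ^ 4 := by
    rw [hfrob, hfrob, pow_right_comm c 2 q, pow_right_comm c 4 q]
  have hE : (c ^ q) ^ 3 * (c + c ^ 2 + c ^ 4) = c ^ 3 * (c ^ q + (c ^ q) ^ 2 + (c ^ q) ^ 4) := by
    rw [mul_pow, pow_right_comm c 3 q, hqq (c + c ^ 2 + c ^ 4)] at h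
    rw [h, htq]
  set u : GaloisField 2 (2 * m) := c ^ (q - 1) with hudef
  have hu : u * c = c ^ q := by
    rw [hudef, ← pow_succ]
    congr 1
    omega
  have hu0 : u ≠ 0 := pow_ne_zero _ hc0
  have hu1 : u - 1 ≠ 0 := by
    intro hh
    apply hfix
    rw [← hu, sub_eq_zero.mp hh, one_mul]
  rw [← hu] at hE
  have hH : c ^ 4 * u * (u - 1) * (c ^ 3 * u ^ 2 + c * u + u + 1) = 0 := by
    linear_combination hE + (c ^ 7 * u ^ 4 - c ^ 7 * u ^ 3) * h2
  have hR : c ^ 3 * u ^ 2 + c * u + u + 1 = 0 := by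
    have hne : c ^ 4 * u * (u - 1) ≠ 0 :=
      mul_ne_zero (mul_ne_zero (pow_ne_zero _ hc0) hu0) hu1
    exact (mul_eq_zero.mp hH).resolve_left hne
  have hd : u * c ^ 2 + 1 ≠ 0 := by
    intro hd0
    apply hu1
    linear_combination hR - c * u * hd0 - h2
  have hKey : (u + u * c ^ 2) ^ 3 = u * (u * c ^ 2 + 1) ^ 6 := by
    linear_combination (u + u^2 + c*u^2 + c^3*u^3 + c^6*u^3 + c^6*u^4 + c^7*u^4 + c^9*u^5) * hR +
      (-u - u^2 - c*u^2 - c*u^3 - 3*c^2*u^2 + c^2*u^3 - c^3*u^3 - c^3*u^4 - 6*c^4*u^3 - c^4*u^4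
        - 11*c^6*u^4 - c^6*u^5 - c^7*u^4 - c^7*u^5 - 8*c^8*u^5 - c^9*u^5 - c^9*u^6 - 4*c^10*u^6
        - c^12*u^7) * h2
  set v : GaloisField 2 (2 * m) := (u + u * c ^ 2) / (u * c ^ 2 + 1) ^ 2 with hvdef
  have hv3 : v ^ 3 = u := by
    rw [hvdef, div_pow, ← pow_mul, hKey, show 2 * 3 = 6 by norm_num]
    exact mul_div_cancel_right₀ u (pow_ne_zero 6 hd)
  have hwq : (c ^ q * c) ^ q = c ^ q * c := by
    rw [mul_pow, hqq]; ring
  obtain ⟨γ, hγ⟩ := hcube (c ^ q * c) hwq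
  have hw0 : c ^ q * c ≠ 0 := mul_ne_zero (pow_ne_zero _ hc0) hc0
  have hγ0 : γ ≠ 0 := by
    intro hh
    apply hw0
    rw [← hγ, hh]
    ring
  refine ⟨c * v * γ⁻¹, ?_⟩
  rw [mul_pow, mul_pow, hv3, inv_pow, hγ, ← hu]
  field_simp
end

section
/- Let n = 2m with m odd and gcd(3, m) = 1, and let s be a positive integer with 3s ≡ 1 (mod n). If x ∈ F_{2^n} \ {0, 1} satisfies (x + x^2)/(x + x^{2^s})^{2^{2s} - 2^s + 1} ∈ F_{2^m}, then x + x^{2^s} is a cube in F_{2^n}. -/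
theorem stmt_8 (m s : ℕ) (hm : 0 < m) (hodd : Odd m) (h3m : Nat.gcd 3 m = 1)
    (hs : 0 < s) (hs1 : 3 * s ≡ 1 [MOD 2 * m])
    (x : GaloisField 2 (2 * m)) (hx0 : x ≠ 0) (hx1 : x ≠ 1)
    (h : ((x + x ^ 2) / (x + x ^ (2 ^ s)) ^ (2 ^ (2 * s) - 2 ^ s + 1)) ^ (2 ^ m) =
          (x + x ^ 2) / (x + x ^ (2 ^ s)) ^ (2 ^ (2 * s) - 2 ^ s + 1)) :
    ∃ β : GaloisField 2 (2 * m), β ^ 3 = x + x ^ (2 ^ s) := by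
  haveI : Fact (Nat.Prime 2) := ⟨Nat.prime_two⟩
  haveI : Fintype (GaloisField 2 (2 * m)) := Fintype.ofFinite _
  have hcard : Fintype.card (GaloisField 2 (2 * m)) = 2 ^ (2 * m) := by
    rw [← Nat.card_eq_fintype_card]; exact GaloisField.card 2 (2 * m) (by omega)
  have h2 : (2 : GaloisField 2 (2 * m)) = 0 := by
    exact_mod_cast CharP.cast_eq_zero (GaloisField 2 (2 * m)) 2
  -- arithmetic preliminaries
  have h4mod : ∀ a : ℕ, ∃ i, 2 ^ (2 * a) = 3 * i + 1 := by
    intro a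
    induction a with
    | zero => exact ⟨0, rfl⟩
    | succ a ih =>
      obtain ⟨i, hi⟩ := ih
      exact ⟨4 * i + 1, by rw [Nat.mul_succ, pow_add, hi]; ring⟩
  have hodd2 : ∀ a : ℕ, a % 2 = 1 → ∃ j, 2 ^ a = 3 * j + 2 := by
    intro a ha
    obtain ⟨i, hi⟩ := h4mod (a / 2)
    refine ⟨2 * i, ?_⟩
    have : a = 2 * (a / 2) + 1 := by omega
    rw [this, pow_succ, hi]; ring
  have hsodd : s % 2 = 1 := by
    have h2d : 3 * s % 2 = 1 % 2 := hs1.of_dvd ⟨m, rfl⟩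
    omega
  obtain ⟨k, hk⟩ : ∃ k, 3 * s = 2 * m * k + 1 := by
    refine ⟨3 * s / (2 * m), ?_⟩
    have hd := Nat.div_add_mod (3 * s) (2 * m)
    have h1 : 3 * s % (2 * m) = 1 % (2 * m) := hs1
    have h1' : 1 % (2 * m) = 1 := Nat.mod_eq_of_lt (by omega)
    omega
  -- Frobenius facts
  have hpcp : ∀ (a : GaloisField 2 (2 * m)) (j : ℕ), a ^ ((2 : ℕ) ^ (2 * m)) ^ j = a := by
    intro a j
    rw [← hcard]; exact FiniteField.pow_card_pow j a
  have hF1 : ∀ a : GaloisField 2 (2 * m), a ^ (2 ^ (3 * s)) = a ^ 2 := by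
    intro a
    have he : (2 : ℕ) ^ (3 * s) = ((2 : ℕ) ^ (2 * m)) ^ k * 2 := by
      rw [hk, pow_succ, pow_mul]
    rw [he, pow_mul, hpcp]
  have hF2 : ∀ a : GaloisField 2 (2 * m), a ^ (2 ^ (6 * s)) = a ^ 4 := by
    intro a
    have he : (2 : ℕ) ^ (6 * s) = ((2 : ℕ) ^ (2 * m)) ^ (2 * k) * 4 := by
      have h6 : 6 * s = 2 * m * (2 * k) + 2 := by
        have : 2 * m * (2 * k) = 2 * (2 * m * k) := by ring
        omega
      rw [h6, pow_add, pow_mul]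
      norm_num
    rw [he, pow_mul, hpcp]
  have hfrob : ∀ (a b : GaloisField 2 (2 * m)) (j : ℕ),
      (a + b) ^ (2 ^ j : ℕ) = a ^ (2 ^ j : ℕ) + b ^ (2 ^ j : ℕ) := by
    intro a b j; exact add_pow_char_pow a b 2 j
  -- names
  set x1 := x ^ (2 ^ s) with hx1d
  set x2 := x1 ^ (2 ^ s) with hx2d
  have hx2x : x2 = x ^ (2 ^ (2 * s)) := by
    rw [hx2d, hx1d, ← pow_mul, ← pow_add, ← two_mul]
  have hx3 : x2 ^ (2 ^ s) = x ^ 2 := by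
    rw [hx2x, ← pow_mul, ← pow_add]
    have : 2 * s + s = 3 * s := by omega
    rw [this, hF1]
  by_cases hdeg : x ^ 2 + x + 1 = 0
  · -- degenerate case : x has order 3, x + x^(2^s) = 1
    have hx3e : x ^ 3 = 1 := by linear_combination (x - 1) * hdeg
    obtain ⟨j, hj⟩ := hodd2 s hsodd
    have hxs : x1 = x ^ 2 := by
      rw [hx1d, hj, pow_add, pow_mul, hx3e, one_pow, one_mul]
    refine ⟨1, ?_⟩
    rw [hxs, one_pow]
    linear_combination -hdeg + h2
  · have hx1ne : x + 1 ≠ 0 := by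
      intro hcon
      exact hx1 (by linear_combination hcon - h2)
    have hu : x + x1 ≠ 0 := by
      intro hcon
      have e1 : x1 = x := by linear_combination hcon - x * h2
      have e1' : x ^ (2 ^ s : ℕ) = x := by rw [← hx1d]; exact e1
      have e2 : x2 = x := by
        calc x2 = (x ^ (2 ^ s : ℕ)) ^ (2 ^ s : ℕ) := by rw [hx2d, hx1d]
        _ = x := by rw [e1']; exact e1'
      have e3 : x ^ 2 = x := by rw [← hx3, e2]; exact e1'
      have : x * (x + 1) = 0 := by linear_combination e3 + x * h2
      rcases mul_eq_zero.1 this with h' | h'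
      exacts [hx0 h', hx1ne h']
    have hw : x + x2 ≠ 0 := by
      intro hcon
      have e1 : x2 = x := by linear_combination hcon - x * h2
      have c1 : x ^ (2 ^ (2 * s)) = x := by rw [← hx2x]; exact e1
      have e2 : x ^ 4 = x := by
        have hee : (2 : ℕ) ^ (6 * s) = 2 ^ (2 * s) * 2 ^ (2 * s) * 2 ^ (2 * s) := by
          rw [← pow_add, ← pow_add]; ring_nf
        have c2 : x ^ ((2 : ℕ) ^ (6 * s)) = x := by
          rw [hee, pow_mul, pow_mul, c1, c1, c1]
        rw [← hF2 x, c2]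
      have : x * (x + 1) * (x ^ 2 + x + 1) = 0 := by
        linear_combination e2 + (x ^ 3 + x ^ 2 + x) * h2
      rcases mul_eq_zero.1 this with h' | h'
      · rcases mul_eq_zero.1 h' with h'' | h''
        exacts [hx0 h'', hx1ne h'']
      · exact hdeg h'
    -- main case
    set u := x + x1 with hud
    set v := x + x ^ 2 with hvd
    set E := u ^ (2 ^ (2 * s) - 2 ^ s + 1) with hEd
    have hU1 : u ^ (2 ^ s : ℕ) = x1 + x2 := by
      rw [hud, hfrob, ← hx1d, ← hx2d]
    set U1 := u ^ (2 ^ s : ℕ) with hU1d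
    have hU2 : U1 ^ (2 ^ s : ℕ) = x2 + x ^ 2 := by
      rw [hU1, hfrob, ← hx2d, hx3]
    set U2 := U1 ^ (2 ^ s : ℕ) with hU2d
    have hU2x : U2 = u ^ (2 ^ (2 * s) : ℕ) := by
      rw [hU2d, hU1d, ← pow_mul, ← pow_add, ← two_mul]
    have hE0 : E ≠ 0 := pow_ne_zero _ hu
    have hU10 : U1 ≠ 0 := pow_ne_zero _ hu
    have hU20 : U2 ≠ 0 := pow_ne_zero _ hU10
    have he : E * U1 = U2 * u := by
      rw [hEd, hU1d, ← pow_add]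
      have h1 : 2 ^ (2 * s) - 2 ^ s + 1 + 2 ^ s = 2 ^ (2 * s) + 1 := by
        have : (2 : ℕ) ^ s ≤ 2 ^ (2 * s) := Nat.pow_le_pow_right (by norm_num) (by omega)
        omega
      rw [h1, pow_succ, hU2x]
    have hq : v ^ (2 ^ m : ℕ) * E = v * E ^ (2 ^ m : ℕ) := by
      rw [div_pow] at h
      exact (div_eq_div_iff (pow_ne_zero _ hE0) hE0).1 h
    have heQ : E ^ (2 ^ m : ℕ) * U1 ^ (2 ^ m : ℕ) = U2 ^ (2 ^ m : ℕ) * u ^ (2 ^ m : ℕ) := by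
      have := congrArg (· ^ (2 ^ m : ℕ)) he
      simpa [mul_pow] using this
    have hA : (v * U1) ^ (2 ^ m : ℕ) * (u * U2) = (v * U1) * (u * U2) ^ (2 ^ m : ℕ) := by
      simp only [mul_pow]
      linear_combination (U1 * U1 ^ (2 ^ m : ℕ)) * hq
        - (v ^ (2 ^ m : ℕ) * U1 ^ (2 ^ m : ℕ)) * he + (v * U1) * heQ
    set W1 := x + x2 with hW1d
    have hW2 : W1 ^ (2 ^ s : ℕ) = x1 + x ^ 2 := by
      rw [hW1d, hfrob, ← hx1d, hx3]
    set W2 := W1 ^ (2 ^ s : ℕ) with hW2d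
    have hW20 : W2 ≠ 0 := pow_ne_zero _ hw
    have hBsplit : W1 * W2 = v * U1 + u * U2 := by
      rw [hW2, hW1d, hvd, hud, hU1, hU2]
      linear_combination -(x * x2 + x ^ 2 * x1) * h2
    have hBC : (W1 * W2) ^ (2 ^ m : ℕ) * (u * U2) = (W1 * W2) * (u * U2) ^ (2 ^ m : ℕ) := by
      rw [hBsplit, hfrob]
      linear_combination hA
    -- the exponent t
    obtain ⟨j', hj'⟩ := hodd2 m (Nat.odd_iff.1 hodd)
    have hc : 2 ^ m + 1 = 3 * (j' + 1) := by omega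
    set c := j' + 1 with hcd
    set t := (2 ^ m - 1) * c with htd
    have h3t : 3 * t = 2 ^ (2 * m) - 1 := by
      have h1 : 1 ≤ (2 : ℕ) ^ m := Nat.one_le_two_pow
      obtain ⟨B, hB⟩ : ∃ B, (2 : ℕ) ^ m = B + 1 := ⟨2 ^ m - 1, by omega⟩
      have hsq : (2 : ℕ) ^ (2 * m) = 2 ^ m * 2 ^ m := by rw [two_mul, pow_add]
      have e1 : 3 * t = B * (B + 2) := by
        rw [htd, hB]
        have : B + 1 - 1 = B := by omega
        rw [this]
        have h3c : 3 * c = B + 2 := by omega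
        calc 3 * (B * c) = B * (3 * c) := by ring
        _ = B * (B + 2) := by rw [h3c]
      have e2 : (2 : ℕ) ^ (2 * m) = B * (B + 2) + 1 := by
        rw [hsq, hB]; ring
      omega
    have hC0 : u * U2 ≠ 0 := mul_ne_zero hu hU20
    have hB0 : W1 * W2 ≠ 0 := mul_ne_zero hw hW20
    have hm1 : (1 : ℕ) ≤ 2 ^ m := Nat.one_le_two_pow
    -- B^t = C^t
    have hDq : (W1 * W2 / (u * U2)) ^ (2 ^ m : ℕ) = W1 * W2 / (u * U2) := by
      rw [div_pow, div_eq_div_iff (pow_ne_zero _ hC0) hC0]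
      exact hBC
    have hD0 : W1 * W2 / (u * U2) ≠ 0 := div_ne_zero hB0 hC0
    have hDq1 : (W1 * W2 / (u * U2)) ^ (2 ^ m - 1 : ℕ) = 1 := by
      have hpows : (W1 * W2 / (u * U2)) ^ (2 ^ m - 1 : ℕ) * (W1 * W2 / (u * U2))
          = 1 * (W1 * W2 / (u * U2)) := by
        rw [← pow_succ]
        have : 2 ^ m - 1 + 1 = 2 ^ m := by omega
        rw [this, hDq, one_mul]
      exact mul_right_cancel₀ hD0 hpows
    have hDt : (W1 * W2 / (u * U2)) ^ t = 1 := by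
      rw [htd, pow_mul, hDq1, one_pow]
    have hBtCt : (W1 * W2) ^ t = (u * U2) ^ t := by
      rw [div_pow, div_eq_one_iff_eq (pow_ne_zero _ hC0)] at hDt
      exact hDt
    -- cube roots of unity
    have hu3 : (u ^ t) ^ 3 = 1 := by
      rw [← pow_mul]
      have : t * 3 = Fintype.card (GaloisField 2 (2 * m)) - 1 := by rw [hcard]; omega
      rw [this]
      exact FiniteField.pow_card_sub_one_eq_one u hu
    have hw3 : (W1 ^ t) ^ 3 = 1 := by
      rw [← pow_mul]
      have : t * 3 = Fintype.card (GaloisField 2 (2 * m)) - 1 := by rw [hcard]; omega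
      rw [this]
      exact FiniteField.pow_card_sub_one_eq_one W1 hw
    -- compute C^t and B^t
    obtain ⟨i, hi⟩ := h4mod s
    have hU2t : U2 ^ t = u ^ t := by
      calc U2 ^ t = (u ^ (2 ^ (2 * s) : ℕ)) ^ t := by rw [hU2x]
      _ = (u ^ t) ^ (2 ^ (2 * s) : ℕ) := pow_right_comm u _ t
      _ = (u ^ t) ^ (3 * i + 1) := by rw [hi]
      _ = u ^ t := by rw [pow_add, pow_mul, hu3, one_pow, one_mul, pow_one]
    have hCt : (u * U2) ^ t = (u ^ t) ^ 2 := by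
      rw [mul_pow, hU2t]; ring
    obtain ⟨j2, hj2⟩ := hodd2 s hsodd
    have hl : 2 ^ s + 1 = 3 * (j2 + 1) := by omega
    have hW2t : W2 ^ t = (W1 ^ t) ^ (2 ^ s : ℕ) := by
      rw [hW2d]; exact pow_right_comm W1 _ t
    have hBt : (W1 * W2) ^ t = 1 := by
      rw [mul_pow, hW2t]
      have : W1 ^ t * (W1 ^ t) ^ (2 ^ s : ℕ) = (W1 ^ t) ^ (2 ^ s + 1 : ℕ) := by
        rw [pow_succ]; ring
      rw [this, hl, pow_mul, hw3, one_pow]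
    have hut2 : (u ^ t) ^ 2 = 1 := by rw [← hCt, ← hBtCt, hBt]
    have hut : u ^ t = 1 := by
      calc u ^ t = (u ^ t) ^ 2 * u ^ t := by rw [hut2, one_mul]
      _ = (u ^ t) ^ 3 := by ring
      _ = 1 := hu3
    -- extract cube root using cyclicity of the unit group
    have ht0 : 0 < t := by
      have h4 : (4 : ℕ) ≤ 2 ^ (2 * m) := by
        calc (4 : ℕ) = 2 ^ 2 := by norm_num
        _ ≤ 2 ^ (2 * m) := Nat.pow_le_pow_right (by norm_num) (by omega)
      omega
    obtain ⟨g, hg⟩ := IsCyclic.exists_generator (α := (GaloisField 2 (2 * m))ˣ)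
    have horder : orderOf g = 2 ^ (2 * m) - 1 := by
      rw [orderOf_eq_card_of_forall_mem_zpowers hg, Nat.card_units,
        Nat.card_eq_fintype_card, hcard]
    obtain ⟨kz, hkz0⟩ := hg (Units.mk0 u hu)
    have hkz : g ^ kz = Units.mk0 u hu := hkz0
    have hunitt : (Units.mk0 u hu) ^ t = 1 := by
      ext
      simp only [Units.val_pow_eq_pow_val, Units.val_mk0, Units.val_one]
      exact hut
    have hzpow : g ^ (kz * (t : ℤ)) = 1 := by
      rw [zpow_mul, hkz, zpow_natCast, hunitt]
    have hdvd : ((2 ^ (2 * m) - 1 : ℕ) : ℤ) ∣ kz * (t : ℤ) := by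
      rw [← horder]
      exact orderOf_dvd_iff_zpow_eq_one.2 hzpow
    obtain ⟨d, hd⟩ := hdvd
    have hk3 : kz = 3 * d := by
      have hcast : ((2 ^ (2 * m) - 1 : ℕ) : ℤ) = 3 * (t : ℤ) := by
        have := h3t
        omega
      rw [hcast] at hd
      have htz : (t : ℤ) ≠ 0 := by exact_mod_cast ht0.ne'
      have : (t : ℤ) * kz = (t : ℤ) * (3 * d) := by linarith [hd]
      exact mul_left_cancel₀ htz this
    refine ⟨((g ^ d : (GaloisField 2 (2 * m))ˣ) : GaloisField 2 (2 * m)), ?_⟩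
    have hgd : (g ^ d) ^ (3 : ℕ) = Units.mk0 u hu := by
      rw [← hkz, hk3, ← zpow_natCast (g ^ d) 3, ← zpow_mul]
      congr 1
      ring
    calc ((g ^ d : (GaloisField 2 (2 * m))ˣ) : GaloisField 2 (2 * m)) ^ 3
        = (((g ^ d) ^ (3 : ℕ) : (GaloisField 2 (2 * m))ˣ) : GaloisField 2 (2 * m)) := by
          rw [Units.val_pow_eq_pow_val]
    _ = ((Units.mk0 u hu : (GaloisField 2 (2 * m))ˣ) : GaloisField 2 (2 * m)) := by rw [hgd]
    _ = u := rfl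
end

section
/- Let n = 2m with m odd, q = 2^m, a ∈ F_{2^n} with a + a^q ≠ 0, and b ∈ F_{2^n} a non-cube. Then f(x) = a·Tr^n_m(b x^3) + a^q·Tr^n_m(b^3 x^9) is an APN function over F_{2^n}. -/
noncomputable instance galoisFieldFintypeX (p n : ℕ) [Fact p.Prime] :
    Fintype (GaloisField p n) := Fintype.ofFinite _

lemma two_pow_odd_mod_threeX (m : ℕ) (hodd : Odd m) : 2 ^ m % 3 = 2 := by
  obtain ⟨k, hk⟩ := hodd
  subst hk
  have h1 : (2:ℕ) ^ (2*k+1) = 4 ^ k * 2 := by rw [pow_succ, pow_mul]; norm_num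
  have h2 : (4:ℕ) ^ k % 3 = 1 := by rw [Nat.pow_mod]; norm_num
  rw [h1, Nat.mul_mod, h2]

lemma cube_critX {K : Type*} [Field K] [Fintype K] (u : ℕ) (hu : 3 * u = Fintype.card K - 1)
    (x : K) (hx : x ≠ 0) (h : x ^ u = 1) : ∃ y : K, y ^ 3 = x := by
  classical
  have hu0 : u ≠ 0 := by intro h0; rw [h0] at hu; have := Fintype.one_lt_card (α := K); omega
  obtain ⟨g, hg⟩ := IsCyclic.exists_generator (α := Kˣ)
  have hord : orderOf g = Fintype.card K - 1 := by
    rw [orderOf_eq_card_of_forall_mem_zpowers hg, Nat.card_units, Nat.card_eq_fintype_card]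
  set xu : Kˣ := Units.mk0 x hx with hxu
  obtain ⟨n, hn⟩ := Subgroup.mem_zpowers_iff.mp (hg xu)
  have hpow : g ^ (n * u : ℤ) = 1 := by
    rw [zpow_mul, hn]; norm_cast; exact Units.ext (by simpa [hxu] using h)
  have hdvd : (orderOf g : ℤ) ∣ n * u := orderOf_dvd_iff_zpow_eq_one.mpr hpow
  rw [hord, ← hu] at hdvd
  obtain ⟨w, hw⟩ : ∃ w : ℤ, n = 3 * w := by
    obtain ⟨w, hw⟩ := hdvd
    push_cast at hw
    have hune : (u:ℤ) ≠ 0 := by exact_mod_cast hu0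
    exact ⟨w, mul_right_cancel₀ hune (by linarith [hw])⟩
  refine ⟨((g ^ w : Kˣ) : K), ?_⟩
  have hkey : (g ^ w) ^ (3:ℕ) = xu := by
    rw [← hn, hw, ← zpow_natCast, ← zpow_mul, mul_comm]; norm_num
  calc ((g ^ w : Kˣ) : K) ^ 3 = (((g ^ w) ^ (3:ℕ) : Kˣ) : K) := by push_cast; ring
  _ = x := by rw [hkey]; rfl

lemma AS_keyX {R : Type*} [CommRing R] (h2 : (2:R) = 0) (w : R) (k : ℕ) :
    (∑ i ∈ Finset.range k, w^(2^i))^2 + (∑ i ∈ Finset.range k, w^(2^i)) = w^(2^k) + w := by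
  induction k with
  | zero =>
    simp only [Finset.range_zero, Finset.sum_empty, pow_zero, pow_one]
    linear_combination -w*h2
  | succ k ih =>
    rw [Finset.sum_range_succ, pow_succ 2 k, pow_mul]
    linear_combination ih + ((∑ i ∈ Finset.range k, w^(2^i))*w^(2^k) + w^(2^k))*h2

lemma kernel_lemmaX (m : ℕ) (hm : 0 < m) (hodd : Odd m)
    (b d e : GaloisField 2 (2*m)) (hb : ¬ ∃ β : GaloisField 2 (2*m), β ^ 3 = b) (hd : d ≠ 0)
    (h1 : (b*(d*e^2+d^2*e))^(2^m) = b*(d*e^2+d^2*e))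
    (h2 : (b^3*(d*e^8+d^8*e))^(2^m) = b^3*(d*e^8+d^8*e)) :
    e = 0 ∨ e = d := by
  by_contra hcon
  push_neg at hcon
  obtain ⟨he0, hed⟩ := hcon
  have hF2 : (2 : GaloisField 2 (2*m)) = 0 := CharTwo.two_eq_zero
  have hfrob : ∀ x y : GaloisField 2 (2*m), (x+y)^(2^m) = x^(2^m)+y^(2^m) :=
    fun x y => add_pow_char_pow x y 2 m
  have hcard : Fintype.card (GaloisField 2 (2*m)) = 2^(2*m) := by
    have := GaloisField.card 2 (2*m) (by omega : 2*m ≠ 0)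
    simpa [Nat.card_eq_fintype_card] using this
  have hqq : ∀ x : GaloisField 2 (2*m), (x^(2^m))^(2^m) = x := by
    intro x
    have hmm : (2:ℕ)^m * 2^m = 2^(2*m) := by rw [← pow_add]; congr 1; omega
    rw [← pow_mul, hmm, ← hcard, FiniteField.pow_card]
  have hbne : b ≠ 0 := fun h => hb ⟨0, by rw [h]; ring⟩
  have hdvd3 : 3 ∣ 2^m + 1 := by
    have := two_pow_odd_mod_threeX m hodd
    omega
  have hq1 : 1 ≤ 2^m := Nat.one_le_two_pow
  -- the big nat fact
  have hu3 : 3 * (((2^m+1)/3) * (2^m - 1)) = Fintype.card (GaloisField 2 (2*m)) - 1 := by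
    rw [hcard]
    obtain ⟨k, hk⟩ := hdvd3
    have hdiv : (2^m+1)/3 = k := by omega
    rw [hdiv]
    have hsq : (2^m+1) * (2^m-1) = 2^(2*m) - 1 := by
      obtain ⟨r, hr⟩ : ∃ r, 2^m = r + 1 := ⟨2^m - 1, by omega⟩
      have h2m : (2:ℕ)^(2*m) = (2^m)*(2^m) := by rw [two_mul, pow_add]
      rw [h2m, hr]
      simp only [Nat.add_sub_cancel]
      have hA : (r+1+1)*r = r*r+2*r := by ring
      have hB : (r+1)*(r+1) = r*r+2*r+1 := by ring
      rw [hA, hB, Nat.add_sub_cancel]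
    rw [← hsq, hk]
    ring
  -- setup
  set y : GaloisField 2 (2*m) := e * d⁻¹ with hy
  set z : GaloisField 2 (2*m) := y^2 + y with hz
  set c : GaloisField 2 (2*m) := b * d^3 with hcdef
  have hy0 : y ≠ 0 := mul_ne_zero he0 (inv_ne_zero hd)
  have hy1 : y ≠ 1 := by
    intro h
    apply hed
    rw [hy] at h
    field_simp at h
    exact h
  have hz0 : z ≠ 0 := by
    have hzz : z = y*(y+1) := by rw [hz]; ring
    rw [hzz]
    exact mul_ne_zero hy0 (fun h => hy1 (by linear_combination h - hF2))
  have hc0 : c ≠ 0 := mul_ne_zero hbne (pow_ne_zero _ hd)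
  have hcq0 : c^(2^m) ≠ 0 := pow_ne_zero _ hc0
  have hP : b*(d*e^2+d^2*e) = c*z := by
    rw [hcdef, hz, hy]
    field_simp
  have hR : b^3*(d*e^8+d^8*e) = c^3*(z^4+z^2+z) := by
    have hy8 : z^4+z^2+z = y^8+y := by
      rw [hz]
      linear_combination (2*y^7 + 3*y^6 + 2*y^5 + y^4 + y^3 + y^2)*hF2
    rw [hy8, hcdef, hy]
    field_simp
  rw [hP] at h1
  rw [hR] at h2
  set l : GaloisField 2 (2*m) := c * (c^(2^m))⁻¹ with hl
  have hl0 : l ≠ 0 := mul_ne_zero hc0 (inv_ne_zero hcq0)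
  have hzq : z^(2^m) = l * z := by
    rw [mul_pow] at h1
    rw [hl]
    field_simp
    linear_combination h1
  have hlq : l^(2^m) = c^(2^m) * c⁻¹ := by rw [hl, mul_pow, inv_pow, hqq]
  have hlinv : l * l^(2^m) = 1 := by rw [hlq, hl]; field_simp
  have hceq : c = l * c^(2^m) := by rw [hl]; field_simp
  -- non-cube consequence
  have hcube_contra : c ^ (((2^m+1)/3) * (2^m - 1)) = 1 → False := by
    intro hone
    obtain ⟨γ, hγ⟩ := cube_critX _ hu3 c hc0 hone
    apply hb
    refine ⟨γ * d⁻¹, ?_⟩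
    rw [hcdef] at hγ
    field_simp
    linear_combination hγ
  by_cases hl1 : l = 1
  · -- Case A : c ∈ F_q, so c is a cube
    have hcq : c^(2^m) = c := by
      rw [hl1, one_mul] at hceq
      exact hceq.symm
    have hsub1 : c^(2^m - 1) = 1 := by
      have hstep : c^(2^m-1) * c = 1 * c := by
        rw [← pow_succ, one_mul]
        have he : 2^m - 1 + 1 = 2^m := by omega
        rw [he]
        exact hcq
      exact mul_right_cancel₀ hc0 hstep
    apply hcube_contra
    rw [show (2^m+1)/3 * (2^m-1) = (2^m-1) * ((2^m+1)/3) from Nat.mul_comm _ _,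
      pow_mul, hsub1, one_pow]
  · -- Case B
    have main2 : l^4*z^4 + l^2*z^2 + l*z = l^3*(z^4+z^2+z) := by
      rw [mul_pow, hfrob, hfrob, pow_right_comm z 4, pow_right_comm z 2,
        pow_right_comm c 3, hzq] at h2
      have hc3 : c^3 = l^3 * (c^(2^m))^3 := by nth_rewrite 1 [hceq]; ring
      rw [hc3] at h2
      apply mul_left_cancel₀ (pow_ne_zero 3 hcq0)
      linear_combination h2
    have hG : (l+1)*((l^2*z^3+l*z+(l+1))*(l*z)) = 0 := by
      linear_combination main2 + (l^3*z^4 + l^3*z^2 + l^3*z + l^2*z)*hF2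
    have hlp1 : l + 1 ≠ 0 := fun h => hl1 (by linear_combination h - hF2)
    have hlz : l*z ≠ 0 := mul_ne_zero hl0 hz0
    have hcubic : l^2*z^3 + l*z + (l+1) = 0 := by
      rcases mul_eq_zero.mp hG with h | h
      · exact absurd h hlp1
      · rcases mul_eq_zero.mp h with h' | h'
        · exact h'
        · exact absurd h' hlz
    set N : GaloisField 2 (2*m) := l*z^2 with hNdef
    have hN0 : N ≠ 0 := mul_ne_zero hl0 (pow_ne_zero _ hz0)
    have hNq : N^(2^m) = N := by
      rw [hNdef, mul_pow, pow_right_comm z 2, hzq]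
      linear_combination l*z^2*hlinv
    -- get omega (cube root of unity)
    obtain ⟨ω, hω3, hω1⟩ : ∃ ω : GaloisField 2 (2*m), ω^3 = 1 ∧ ω ≠ 1 := by
      haveI : Fact (Nat.Prime 3) := ⟨by norm_num⟩
      haveI : Fintype (GaloisField 2 (2*m))ˣ := Fintype.ofFinite _
      have hdvd : 3 ∣ Fintype.card (GaloisField 2 (2*m))ˣ := by
        have hcu : Fintype.card (GaloisField 2 (2*m))ˣ = Fintype.card (GaloisField 2 (2*m)) - 1 := by
          rw [← Nat.card_eq_fintype_card, Nat.card_units, Nat.card_eq_fintype_card]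
        rw [hcu, hcard]
        have h4 : (2:ℕ)^(2*m) % 3 = 1 := by
          rw [pow_mul]
          rw [Nat.pow_mod]
          norm_num
        set K := (2:ℕ)^(2*m) with hK
        omega
      obtain ⟨x, hx⟩ := exists_prime_orderOf_dvd_card 3 hdvd
      refine ⟨(x : GaloisField 2 (2*m)), ?_, ?_⟩
      · have := pow_orderOf_eq_one x
        rw [hx] at this
        calc ((x:GaloisField 2 (2*m)))^3 = ((x^3 : (GaloisField 2 (2*m))ˣ) : GaloisField 2 (2*m)) := by push_cast; ring
        _ = 1 := by rw [this]; rfl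
      · intro h
        have : x = 1 := Units.ext (by simpa using h)
        rw [this, orderOf_one] at hx
        norm_num at hx
    have hωq : ω^(2^m) = ω^2 := by
      obtain ⟨k, hk⟩ : ∃ k, 2^m = 3*k + 2 := by
        have := two_pow_odd_mod_threeX m hodd
        exact ⟨2^m/3, by omega⟩
      rw [hk, pow_add, pow_mul, hω3, one_pow, one_mul]
    have hωsum : ω^2 + ω = 1 := by
      have hzero : ω^2 + ω + 1 = 0 := by
        have hprod : (ω+1)*(ω^2+ω+1) = 0 := by
          linear_combination hω3 + (ω^2+ω+1)*hF2
        rcases mul_eq_zero.mp hprod with h | h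
        · exact absurd (show ω = 1 by linear_combination h - hF2) hω1
        · exact h
      linear_combination hzero - hF2
    set θ : GaloisField 2 (2*m) := (N^2)⁻¹ with hθdef
    have hθq : θ^(2^m) = θ := by rw [hθdef, inv_pow, pow_right_comm, hNq]
    set ζ : GaloisField 2 (2*m) := ∑ i ∈ Finset.range m, (θ*ω)^(2^i) with hζdef
    have hζ : ζ^2 + ζ = θ := by
      have h := AS_keyX hF2 (θ*ω) m
      rw [mul_pow, hθq, hωq] at h
      rw [hζdef, h]
      linear_combination θ*hωsum
    set μ : GaloisField 2 (2*m) := N * ζ with hμdef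
    have hN2θ : N^2 * θ = 1 := by rw [hθdef]; field_simp
    have hμ : μ^2 + N*μ + 1 = 0 := by
      rw [hμdef]
      linear_combination N^2*hζ + hN2θ + hF2
    have hquad : l^2 + (N^3+N)*l + 1 = 0 := by
      rw [hNdef]
      linear_combination (l^2*z^3 - l*z - l - 1)*hcubic + (l^2*z^2 + l^2*z + l^2 + l*z + l + 1)*hF2
    have hcube : μ^6 + (N^3+N)*μ^3 + 1 = 0 := by
      linear_combination (μ^4 - μ^3*N + μ^2*N^2 - μ^2 + 3*μ*N - 4*N^2 + 1)*hμ + (2*μ*N^3 - 2*μ*N + 2*N^2)*hF2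
    have hfac : (l + μ^3)*(l + μ^3 + (N^3+N)) = 0 := by
      linear_combination hquad + hcube + (l*μ^3 - 1)*hF2
    obtain ⟨ρ, hρ3, hρeq⟩ : ∃ ρ : GaloisField 2 (2*m), l = ρ^3 ∧ ρ^2 + N*ρ + 1 = 0 := by
      rcases mul_eq_zero.mp hfac with h | h
      · exact ⟨μ, by linear_combination h - μ^3*hF2, hμ⟩
      · refine ⟨μ + N, ?_, ?_⟩
        · linear_combination h - 3*N*hμ + (-μ^3 - N^3 + N)*hF2
        · linear_combination hμ + (μ*N+N^2)*hF2
    have hρq : (ρ^(2^m))^2 + N*(ρ^(2^m)) + 1 = 0 := by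
      have h := congrArg (fun t : GaloisField 2 (2*m) => t^(2^m)) hρeq
      rw [hfrob, hfrob, mul_pow, pow_right_comm ρ 2, hNq, one_pow,
        zero_pow (by positivity : (2:ℕ)^m ≠ 0)] at h
      linear_combination h
    have hor : ρ^(2^m) = ρ ∨ ρ^(2^m) = ρ + N := by
      have hpr : (ρ^(2^m) + ρ)*(ρ^(2^m) + ρ + N) = 0 := by
        linear_combination hρq + hρeq + (ρ^(2^m)*ρ - 1)*hF2
      rcases mul_eq_zero.mp hpr with h | h
      · left; linear_combination h - ρ*hF2
      · right; linear_combination h - (ρ+N)*hF2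
    have hl3 : l ^ ((2^m+1)/3) ≠ 1 := by
      intro hone
      apply hcube_contra
      set v := (2^m+1)/3 with hv
      have hlv : l^v = c^v * ((c^v)^(2^m))⁻¹ := by
        rw [hl, mul_pow, inv_pow, pow_right_comm]
      rw [hlv] at hone
      have hgne : (c^v)^(2^m) ≠ 0 := pow_ne_zero _ (pow_ne_zero _ hc0)
      have hgeq : (c^v)^(2^m) = c^v := by
        have h' : c^v * ((c^v)^(2^m))⁻¹ * (c^v)^(2^m) = 1 * (c^v)^(2^m) := by rw [hone]
        rw [one_mul, inv_mul_cancel_right₀ hgne] at h'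
        exact h'.symm
      have hone' : (c^v)^(2^m - 1) = 1 := by
        have hstep : (c^v)^(2^m-1) * c^v = 1 * c^v := by
          rw [← pow_succ, one_mul]
          have he : 2^m - 1 + 1 = 2^m := by omega
          rw [he]
          exact hgeq
        exact mul_right_cancel₀ (pow_ne_zero _ hc0) hstep
      rw [pow_mul]
      exact hone'
    rcases hor with h | h
    · have hlq_eq : l^(2^m) = l := by rw [hρ3, pow_right_comm, h]
      rw [hlq_eq] at hlinv
      have hsq0 : (l+1)^2 = 0 := by linear_combination hlinv + (l+1)*hF2
      have : l + 1 = 0 := by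
        exact pow_eq_zero_iff (by norm_num : (2:ℕ) ≠ 0) |>.mp hsq0
      exact hl1 (by linear_combination this - hF2)
    · apply hl3
      have hρn : ρ^(2^m) * ρ = 1 := by
        rw [h]
        linear_combination hρeq - hF2
      have hρq1 : ρ^(2^m + 1) = 1 := by rw [pow_succ]; exact hρn
      have h3v : 3 * ((2^m+1)/3) = 2^m + 1 := Nat.mul_div_cancel' hdvd3
      rw [hρ3, ← pow_mul, h3v]
      exact hρq1


lemma step2X (m : ℕ) (hm : 0 < m) (a P R : GaloisField 2 (2*m))
    (ha : a + a^(2^m) ≠ 0)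
    (hE : a*(P + P^(2^m)) + a^(2^m)*(R + R^(2^m)) = 0) :
    P^(2^m) = P ∧ R^(2^m) = R := by
  have hF2 : (2 : GaloisField 2 (2*m)) = 0 := CharTwo.two_eq_zero
  have hfrob : ∀ x y : GaloisField 2 (2*m), (x+y)^(2^m) = x^(2^m)+y^(2^m) :=
    fun x y => add_pow_char_pow x y 2 m
  have hcard : Fintype.card (GaloisField 2 (2*m)) = 2^(2*m) := by
    have := GaloisField.card 2 (2*m) (by omega : 2*m ≠ 0)
    simpa [Nat.card_eq_fintype_card] using this
  have hqq : ∀ x : GaloisField 2 (2*m), (x^(2^m))^(2^m) = x := by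
    intro x
    have hmm : (2:ℕ)^m * 2^m = 2^(2*m) := by rw [← pow_add]; congr 1; omega
    rw [← pow_mul, hmm, ← hcard, FiniteField.pow_card]
  have hE2 : a^(2^m)*(P + P^(2^m)) + a*(R + R^(2^m)) = 0 := by
    have h := congrArg (fun t : GaloisField 2 (2*m) => t^(2^m)) hE
    rw [hfrob, mul_pow, mul_pow, hfrob, hfrob, hqq, hqq, hqq,
      zero_pow (by positivity : (2:ℕ)^m ≠ 0)] at h
    linear_combination h
  have hPR : P + P^(2^m) = R + R^(2^m) := by
    have hmul : (a + a^(2^m)) * ((P+P^(2^m)) + (R+R^(2^m))) = 0 := by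
      linear_combination hE + hE2
    rcases mul_eq_zero.mp hmul with h | h
    · exact absurd h ha
    · linear_combination h - (R+R^(2^m))*hF2
  have hP0 : P + P^(2^m) = 0 := by
    have hmul : (a + a^(2^m)) * (P+P^(2^m)) = 0 := by
      linear_combination hE + a^(2^m)*hPR
    rcases mul_eq_zero.mp hmul with h | h
    · exact absurd h ha
    · exact h
  have hR0 : R + R^(2^m) = 0 := by linear_combination hP0 - hPR
  exact ⟨by linear_combination hP0 - P*hF2, by linear_combination hR0 - R*hF2⟩

lemma keyX (m : ℕ) (hm : 0 < m) (hodd : Odd m)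
    (a b : GaloisField 2 (2 * m))
    (ha : a + a ^ (2 ^ m) ≠ 0)
    (hb : ¬ ∃ β : GaloisField 2 (2 * m), β ^ 3 = b)
    (f : GaloisField 2 (2 * m) → GaloisField 2 (2 * m))
    (hf : ∀ x, f x = a * (b * x ^ 3 + (b * x ^ 3) ^ (2 ^ m)) +
        a ^ (2 ^ m) * (b ^ 3 * x ^ 9 + (b ^ 3 * x ^ 9) ^ (2 ^ m)))
    (d : GaloisField 2 (2 * m)) (hd : d ≠ 0) (β : GaloisField 2 (2 * m))
    (x1 x2 : GaloisField 2 (2 * m))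
    (hx1 : f x1 + f (x1 + d) = β) (hx2 : f x2 + f (x2 + d) = β) :
    x2 = x1 ∨ x2 = x1 + d := by
  have hF2 : (2 : GaloisField 2 (2*m)) = 0 := CharTwo.two_eq_zero
  have hfrob : ∀ x y : GaloisField 2 (2*m), (x+y)^(2^m) = x^(2^m)+y^(2^m) :=
    fun x y => add_pow_char_pow x y 2 m
  have hsum : f x1 + f (x1+d) + (f x2 + f (x2+d)) = 0 := by
    rw [hx1, hx2]; linear_combination β*hF2
  have hA : b*x1^3 + b*(x1+d)^3 + (b*x2^3 + b*(x2+d)^3)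
      = b*(d*(x1+x2)^2 + d^2*(x1+x2)) := by
    linear_combination (b*d^3 + b*d^2*x1 + b*d^2*x2 + b*d*x1^2 - b*d*x1*x2 + b*d*x2^2
      + b*x1^3 + b*x2^3)*hF2
  have hB : b^3*x1^9 + b^3*(x1+d)^9 + (b^3*x2^9 + b^3*(x2+d)^9)
      = b^3*(d*(x1+x2)^8 + d^8*(x1+x2)) := by
    linear_combination (b^3*d^9 + 4*b^3*d^8*x1 + 4*b^3*d^8*x2 + 18*b^3*d^7*x1^2
      + 18*b^3*d^7*x2^2 + 42*b^3*d^6*x1^3 + 42*b^3*d^6*x2^3 + 63*b^3*d^5*x1^4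
      + 63*b^3*d^5*x2^4 + 63*b^3*d^4*x1^5 + 63*b^3*d^4*x2^5 + 42*b^3*d^3*x1^6
      + 42*b^3*d^3*x2^6 + 18*b^3*d^2*x1^7 + 18*b^3*d^2*x2^7 + 4*b^3*d*x1^8
      - 4*b^3*d*x1^7*x2 - 14*b^3*d*x1^6*x2^2 - 28*b^3*d*x1^5*x2^3 - 35*b^3*d*x1^4*x2^4
      - 28*b^3*d*x1^3*x2^5 - 14*b^3*d*x1^2*x2^6 - 4*b^3*d*x1*x2^7 + 4*b^3*d*x2^8
      + b^3*x1^9 + b^3*x2^9)*hF2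
  have hE : a*((b*(d*(x1+x2)^2 + d^2*(x1+x2))) + (b*(d*(x1+x2)^2 + d^2*(x1+x2)))^(2^m))
      + a^(2^m)*((b^3*(d*(x1+x2)^8 + d^8*(x1+x2))) + (b^3*(d*(x1+x2)^8 + d^8*(x1+x2)))^(2^m)) = 0 := by
    calc a*((b*(d*(x1+x2)^2 + d^2*(x1+x2))) + (b*(d*(x1+x2)^2 + d^2*(x1+x2)))^(2^m))
      + a^(2^m)*((b^3*(d*(x1+x2)^8 + d^8*(x1+x2))) + (b^3*(d*(x1+x2)^8 + d^8*(x1+x2)))^(2^m))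
        = f x1 + f (x1+d) + (f x2 + f (x2+d)) := by
          simp only [hf]
          rw [← hA, ← hB, hfrob, hfrob, hfrob, hfrob, hfrob, hfrob]
          ring
      _ = 0 := hsum
  obtain ⟨h1, h2⟩ := step2X m hm a _ _ ha hE
  rcases kernel_lemmaX m hm hodd b d (x1+x2) hb hd h1 h2 with h | h
  · left; linear_combination h - x1*hF2
  · right; linear_combination h - x1*hF2

theorem stmt_10 (m : ℕ) (hm : 0 < m) (hodd : Odd m)
    (a b : GaloisField 2 (2 * m))
    (ha : a + a ^ (2 ^ m) ≠ 0)
    (hb : ¬ ∃ β : GaloisField 2 (2 * m), β ^ 3 = b)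
    (f : GaloisField 2 (2 * m) → GaloisField 2 (2 * m))
    (hf : ∀ x, f x = a * (b * x ^ 3 + (b * x ^ 3) ^ (2 ^ m)) +
        a ^ (2 ^ m) * (b ^ 3 * x ^ 9 + (b ^ 3 * x ^ 9) ^ (2 ^ m))) :
    ∀ d : GaloisField 2 (2 * m), d ≠ 0 → ∀ β : GaloisField 2 (2 * m),
      {x : GaloisField 2 (2 * m) | f x + f (x + d) = β}.ncard ≤ 2 := by
  intro d hd β
  rcases Set.eq_empty_or_nonempty {x : GaloisField 2 (2 * m) | f x + f (x + d) = β} with hS | ⟨x0, hx0⟩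
  · rw [hS]; simp
  · have hsub : {x : GaloisField 2 (2 * m) | f x + f (x + d) = β} ⊆ {x0, x0 + d} := by
      intro x hx
      rcases keyX m hm hodd a b ha hb f hf d hd β x0 x hx0 hx with h | h
      · exact Or.inl h
      · exact Or.inr h
    calc {x : GaloisField 2 (2 * m) | f x + f (x + d) = β}.ncard
        ≤ ({x0, x0 + d} : Set (GaloisField 2 (2 * m))).ncard :=
          Set.ncard_le_ncard hsub (Set.toFinite _)
      _ ≤ 2 := le_trans (Set.ncard_insert_le _ _) (by simp)
end

section
/- Let n = 2m with m odd, q = 2^m, a ∈ F_{2^n} with a + a^q ≠ 0, b a non-cube in F_{2^n}, and c ∈ F_{2^n} \ F_{2^m}. Then f(x) = a·Tr^n_m(b x^3) + a^q·Tr^n_m(c x^{2^m + 1}) is an APN function over F_{2^n}. -/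
theorem stmt_11 (m : ℕ) (hm : 0 < m) (hodd : Odd m)
    (a b c : GaloisField 2 (2 * m))
    (ha : a + a ^ (2 ^ m) ≠ 0)
    (hb : ¬ ∃ β : GaloisField 2 (2 * m), β ^ 3 = b)
    (hc : c ^ (2 ^ m) ≠ c)
    (f : GaloisField 2 (2 * m) → GaloisField 2 (2 * m))
    (hf : ∀ x, f x = a * (b * x ^ 3 + (b * x ^ 3) ^ (2 ^ m)) +
        a ^ (2 ^ m) * (c * x ^ (2 ^ m + 1) + (c * x ^ (2 ^ m + 1)) ^ (2 ^ m))) :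
    ∀ d : GaloisField 2 (2 * m), d ≠ 0 → ∀ β : GaloisField 2 (2 * m),
      {x : GaloisField 2 (2 * m) | f x + f (x + d) = β}.ncard ≤ 2 := by
  intro d hd β
  have h2 : (2 : GaloisField 2 (2 * m)) = 0 := CharTwo.two_eq_zero
  have inst : Fintype (GaloisField 2 (2*m)) := Fintype.ofFinite _
  set φ : GaloisField 2 (2*m) →+* GaloisField 2 (2*m) := iterateFrobenius _ 2 m with hφdef
  have hφ : ∀ t : GaloisField 2 (2*m), t ^ 2 ^ m = φ t := fun t => rfl
  have hcard : Nat.card (GaloisField 2 (2*m)) = 2 ^ (2*m) := GaloisField.card 2 (2*m) (by omega)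
  have hpow : ∀ t : GaloisField 2 (2*m), t ^ (2 ^ (2*m)) = t := by
    intro t
    have h := FiniteField.pow_card t
    rwa [← Nat.card_eq_fintype_card, hcard] at h
  have hmm : (2:ℕ)^m * 2^m = 2^(2*m) := by rw [two_mul, pow_add]
  have hq2 : ∀ t : GaloisField 2 (2*m), φ (φ t) = t := by
    intro t
    rw [← hφ, ← hφ, ← pow_mul, hmm]
    exact hpow t
  have ha' : a + φ a ≠ 0 := by rwa [hφ] at ha
  -- independence over the subfield fixed by φ
  have hindep : ∀ u v : GaloisField 2 (2*m), φ u = u → φ v = v →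
      a * u + φ a * v = 0 → u = 0 ∧ v = 0 := by
    intro u v hu hv h
    have h' : φ a * u + a * v = 0 := by
      have h3 := congrArg φ h
      simp only [map_add, map_mul, map_zero, hu, hv, hq2] at h3
      linear_combination h3
    have huv : u = v := by
      have h3 : (a + φ a) * (u + v) = 0 := by linear_combination h + h'
      rcases mul_eq_zero.1 h3 with h4 | h4
      · exact absurd h4 ha'
      · linear_combination h4 - v * h2
    have hu0 : u = 0 := by
      have h3 : (a + φ a) * u = 0 := by linear_combination h + φ a * huv
      rcases mul_eq_zero.1 h3 with h4 | h4
      · exact absurd h4 ha'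
      · exact h4
    exact ⟨hu0, huv ▸ hu0⟩
  -- b is nonzero
  have hb0 : b ≠ 0 := by
    intro h; exact hb ⟨0, by rw [h]; ring⟩
  have hmod : ∃ t : ℕ, 2 ^ m = 3 * t + 2 := by
    obtain ⟨k, hk⟩ := hodd
    have h4 : 4 ^ k % 3 = 1 := by
      have h5 := Nat.pow_mod 4 k 3
      simpa using h5
    have h5 : 2 ^ m % 3 = 2 := by
      rw [hk, pow_succ, pow_mul, show (2:ℕ)^2 = 4 from rfl]
      omega
    exact ⟨2 ^ m / 3, by omega⟩
  -- the cube argument : b * e^3 is never fixed by φ for e ≠ 0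
  have hcube : ∀ e : GaloisField 2 (2*m), e ≠ 0 → φ (b * e^3) ≠ b * e^3 := by
    intro e he hs
    obtain ⟨t, ht⟩ := hmod
    set s := b * e^3 with hsdef
    have hs0 : s ≠ 0 := mul_ne_zero hb0 (pow_ne_zero _ he)
    have hkey : s ^ (3*t+2) = s := by rw [← ht, hφ]; exact hs
    have h1 : s ^ (3*t+1) = 1 := by
      have h2' : s ^ (3*t+1) * s = 1 * s := by
        rw [one_mul, ← pow_succ, show 3*t+1+1 = 3*t+2 by omega]
        exact hkey
      exact mul_right_cancel₀ hs0 h2'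
    have he3 : (s ^ (2*t+1)) ^ 3 = s := by
      rw [← pow_mul, show (2*t+1)*3 = (3*t+1)*2 + 1 by ring, pow_succ, pow_mul, h1,
        one_pow, one_mul]
    exact hb ⟨s ^ (2*t+1) * e⁻¹, by rw [mul_pow, he3, hsdef]; field_simp⟩
  -- main argument
  rcases Set.eq_empty_or_nonempty {x : GaloisField 2 (2*m) | f x + f (x + d) = β} with hS | ⟨x₀, hx₀⟩
  · rw [hS]; simp
  · have hsub : {x : GaloisField 2 (2*m) | f x + f (x + d) = β} ⊆ {x₀, x₀ + d} := by
      intro y hy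
      have hx : f x₀ + f (x₀ + d) = β := hx₀
      have hy' : f y + f (y + d) = β := hy
      rw [hf x₀, hf (x₀ + d)] at hx
      rw [hf y, hf (y + d)] at hy'
      simp only [pow_succ, hφ, map_add, map_mul, map_pow, hq2] at hx hy'
      have key : a * (b * ((x₀+y)^2*d + (x₀+y)*d^2)
                      + φ b * ((φ x₀ + φ y)^2 * φ d + (φ x₀ + φ y) * (φ d)^2))
               + φ a * ((c + φ c) * ((φ x₀ + φ y) * d + (x₀ + y) * φ d)) = 0 := by
        linear_combination hx + hy' +
          (-(a*b)*(x₀^3 + y^3 + x₀^2*d + y^2*d - x₀*y*d + x₀*d^2 + y*d^2 + d^3)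
           - (a*(φ b))*((φ x₀)^3 + (φ y)^3 + (φ x₀)^2*(φ d) + (φ y)^2*(φ d)
               - (φ x₀)*(φ y)*(φ d) + (φ x₀)*(φ d)^2 + (φ y)*(φ d)^2 + (φ d)^3)
           - (φ a)*(c + φ c)*((φ x₀)*x₀ + (φ y)*y + (φ d)*d) + β) * h2
      have fixU : φ (b * ((x₀+y)^2*d + (x₀+y)*d^2)
              + φ b * ((φ x₀ + φ y)^2 * φ d + (φ x₀ + φ y) * (φ d)^2))
            = b * ((x₀+y)^2*d + (x₀+y)*d^2)
              + φ b * ((φ x₀ + φ y)^2 * φ d + (φ x₀ + φ y) * (φ d)^2) := by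
        simp only [map_add, map_mul, map_pow, hq2]
        ring
      have fixV : φ ((c + φ c) * ((φ x₀ + φ y) * d + (x₀ + y) * φ d))
            = (c + φ c) * ((φ x₀ + φ y) * d + (x₀ + y) * φ d) := by
        simp only [map_add, map_mul, map_pow, hq2]
        ring
      obtain ⟨hu, hv⟩ := hindep _ _ fixU fixV key
      have hcφ : c + φ c ≠ 0 := by
        intro h
        apply hc
        rw [hφ]
        linear_combination h - c * h2
      have hH : (φ x₀ + φ y) * d + (x₀ + y) * φ d = 0 := by
        rcases mul_eq_zero.1 hv with h | h
        · exact absurd h hcφ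
        · exact h
      have hfact : ((x₀+y)^2 + (x₀+y)*d) * (b*d^3 + φ b * (φ d)^3) = 0 := by
        linear_combination d^2 * hu +
          (-(φ b * φ d * ((x₀+y)*(φ d) + d*(φ x₀ + φ y)) + φ b * (φ d)^2 * d)) * hH +
          ((φ b * φ d * ((x₀+y)*(φ d) + d*(φ x₀ + φ y)) + φ b * (φ d)^2 * d)
             * (x₀+y) * (φ d)) * h2
      simp only [Set.mem_insert_iff, Set.mem_singleton_iff]
      rcases mul_eq_zero.1 hfact with h | h
      · have h3 : (x₀+y) * ((x₀+y)+d) = 0 := by linear_combination h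
        rcases mul_eq_zero.1 h3 with h' | h'
        · left; linear_combination h' - x₀ * h2
        · right; linear_combination h' - (x₀ + d) * h2
      · exfalso
        apply hcube d hd
        have h4 : φ (b*d^3) = φ b * (φ d)^3 := by simp [map_mul, map_pow]
        rw [h4]
        linear_combination h - b*d^3 * h2
    calc {x : GaloisField 2 (2*m) | f x + f (x + d) = β}.ncard
        ≤ ({x₀, x₀ + d} : Set (GaloisField 2 (2*m))).ncard :=
          Set.ncard_le_ncard hsub (Set.toFinite _)
      _ ≤ 2 := (Set.ncard_insert_le _ _).trans (by simp)
end

section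
/- Let n = 2m with m odd, q = 2^m, a ∈ F_{2^n} with a + a^q ≠ 0, and b, c ∈ F_{2^n}^* with c^2/b ∉ F_{2^m}. Then f(x) = a·Tr^n_m(b x^3) + a^q·Tr^n_m(c x^{2^{n-1} + 1}) is an APN function over F_{2^n}. -/
theorem apn_aux {F : Type*} [Field F] [CharP F 2] (m : ℕ) (hm : 0 < m)
    (hcard : ∀ x : F, x ^ 2 ^ (2 * m) = x)
    (a b c : F)
    (ha : a + a ^ (2 ^ m) ≠ 0) (hb : b ≠ 0)
    (hcb : (c ^ 2 / b) ^ (2 ^ m) ≠ c ^ 2 / b)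
    (f : F → F)
    (hf : ∀ x, f x = a * (b * x ^ 3 + (b * x ^ 3) ^ (2 ^ m)) +
        a ^ (2 ^ m) * (c * x ^ (2 ^ (2 * m - 1) + 1) + (c * x ^ (2 ^ (2 * m - 1) + 1)) ^ (2 ^ m))) :
    ∀ d : F, d ≠ 0 → ∀ β : F,
      {x : F | f x + f (x + d) = β}.ncard ≤ 2 := by
  have h2 : (2 : F) = 0 := by exact_mod_cast CharP.cast_eq_zero F 2
  set q := 2 ^ m with hqdef
  set r := 2 ^ (2 * m - 1) with hrdef
  have hr2 : (2:ℕ) ^ (2 * m) = r * 2 := by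
    rw [hrdef, ← pow_succ]; congr 1; omega
  have hsq : ∀ x : F, (x ^ r) ^ 2 = x := by
    intro x; rw [← pow_mul, ← hr2]; exact hcard x
  have hqq : ∀ x : F, (x ^ q) ^ q = x := by
    intro x; rw [← pow_mul, hqdef, ← pow_add]
    have hmm : m + m = 2 * m := by omega
    rw [hmm]; exact hcard x
  have hFr : ∀ u v : F, (u + v) ^ q = u ^ q + v ^ q := fun u v => add_pow_char_pow u v 2 m
  have hRr : ∀ u v : F, (u + v) ^ r = u ^ r + v ^ r := fun u v => add_pow_char_pow u v 2 (2*m-1)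
  set A : F → F := fun y => a * (b * y + (b * y) ^ q) + a ^ q * (c * y ^ r + (c * y ^ r) ^ q)
    with hA
  -- f in terms of A
  have hfA : ∀ x : F, f x = A (x ^ 3) := by
    intro x
    have h3 : (x ^ 3) ^ r = x ^ (r + 1) := by
      rw [← pow_mul]
      have h3r : 3 * r = 2 ^ (2 * m) + r := by rw [hr2]; ring
      rw [h3r, pow_add, hcard, pow_succ, mul_comm]
    rw [hf x, hA]
    simp only
    rw [h3, add_comm r 1, pow_add, pow_one, mul_comm x (x ^ r), ← pow_succ]
  have hAadd : ∀ u v : F, A (u + v) = A u + A v := by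
    intro u v
    simp only [hA]
    rw [mul_add b, hFr, hRr, mul_add c, hFr]
    ring
  -- injectivity of A
  have hAinj : ∀ y : F, A y = 0 → y = 0 := by
    intro y hy
    by_contra hy0
    simp only [hA] at hy
    set s := y ^ r with hs
    have hs2 : s ^ 2 = y := hsq y
    have hXY : a * (b * y + (b * y) ^ q) = a ^ q * (c * s + (c * s) ^ q) := by
      linear_combination hy - (a ^ q * (c * s + (c * s) ^ q)) * h2
    rw [mul_pow b y q, mul_pow c s q] at hXY
    have hS12 : (s ^ q) ^ 2 = y ^ q := by rw [pow_right_comm, hs2]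
    have E1 : a ^ 2 * (b ^ 2 * y ^ 2 + (b ^ q) ^ 2 * (y ^ q) ^ 2)
        = (a ^ q) ^ 2 * (c ^ 2 * y + (c ^ q) ^ 2 * y ^ q) := by
      have h1 := congrArg (· ^ 2) hXY
      linear_combination h1 + (a^q)^2 * c^2 * hs2 + (a^q)^2 * (c^q)^2 * hS12
        + ((a^q)^2 * c * s * (c^q) * (s^q) - a^2 * b * y * (b^q) * (y^q)) * h2
    have E2 : (a ^ q) ^ 2 * ((b ^ q) ^ 2 * (y ^ q) ^ 2 + b ^ 2 * y ^ 2)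
        = a ^ 2 * ((c ^ q) ^ 2 * y ^ q + c ^ 2 * y) := by
      have h1 := congrArg (· ^ q) E1
      rw [mul_pow, hFr, mul_pow, mul_pow, mul_pow, hFr, mul_pow, mul_pow] at h1
      rw [pow_right_comm a 2 q, pow_right_comm b 2 q, pow_right_comm y 2 q,
        pow_right_comm (a^q) 2 q, pow_right_comm (b^q) 2 q, pow_right_comm (y^q) 2 q,
        pow_right_comm c 2 q, pow_right_comm (c^q) 2 q,
        hqq a, hqq b, hqq y, hqq c] at h1
      linear_combination h1
    have key1 : c ^ 2 * y + (c ^ q) ^ 2 * y ^ q = 0 := by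
      have hz : (a ^ 4 - (a ^ q) ^ 4) * (c ^ 2 * y + (c ^ q) ^ 2 * y ^ q) = 0 := by
        linear_combination (a ^ q) ^ 2 * E1 - a ^ 2 * E2
      have hfac : a ^ 4 - (a ^ q) ^ 4 = (a + a ^ q) ^ 4 := by
        linear_combination (-(2*a^3*(a^q) + 3*a^2*(a^q)^2 + 2*a*(a^q)^3 + (a^q)^4)) * h2
      rw [hfac] at hz
      rcases mul_eq_zero.mp hz with h | h
      · exact absurd (pow_eq_zero_iff (by norm_num)|>.mp h) ha
      · exact h
    have ha0 : a ≠ 0 := by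
      intro h; apply ha; rw [h, zero_pow (by positivity), add_zero]
    have key2 : b * y + b ^ q * y ^ q = 0 := by
      have hsq0 : a ^ 2 * (b * y + b ^ q * y ^ q) ^ 2 = 0 := by
        linear_combination E1 + (a ^ q) ^ 2 * key1 + (a ^ 2 * b * y * b ^ q * y ^ q) * h2
      have := (mul_eq_zero.mp hsq0).resolve_left (pow_ne_zero 2 ha0)
      exact pow_eq_zero_iff (by norm_num) |>.mp this
    have hy1 : b ^ q * y ^ q = b * y := by linear_combination key2 - b * y * h2
    have hy2 : (c ^ q) ^ 2 * y ^ q = c ^ 2 * y := by linear_combination key1 - c ^ 2 * y * h2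
    have hyq0 : y ^ q ≠ 0 := pow_ne_zero _ hy0
    have hcross : c ^ 2 * b ^ q = (c ^ q) ^ 2 * b := by
      have h5 : (c ^ 2 * b ^ q) * (y * y ^ q) = ((c ^ q) ^ 2 * b) * (y * y ^ q) := by
        linear_combination c ^ 2 * y * hy1 - b * y * hy2
      exact mul_right_cancel₀ (mul_ne_zero hy0 hyq0) h5
    apply hcb
    have hbq0 : b ^ q ≠ 0 := pow_ne_zero _ hb
    rw [div_pow, pow_right_comm c 2 q]
    field_simp
    linear_combination -hcross
  -- main count
  intro d hd β
  rcases Set.eq_empty_or_nonempty {x : F | f x + f (x + d) = β} with hE | ⟨x₀, hx₀⟩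
  · rw [hE]; simp
  · have hderiv : ∀ x : F, f x + f (x + d) = A (d * x ^ 2 + d ^ 2 * x + d ^ 3) := by
      intro x
      rw [hfA x, hfA (x + d), ← hAadd]
      congr 1
      linear_combination (x ^ 3 + x ^ 2 * d + x * d ^ 2) * h2
    have hsub : {x : F | f x + f (x + d) = β} ⊆ {x₀, x₀ + d} := by
      intro x hx
      simp only [Set.mem_setOf_eq] at hx hx₀
      simp only [Set.mem_insert_iff, Set.mem_singleton_iff]
      have hzero : A ((d * x ^ 2 + d ^ 2 * x + d ^ 3) + (d * x₀ ^ 2 + d ^ 2 * x₀ + d ^ 3)) = 0 := by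
        rw [hAadd, ← hderiv x, ← hderiv x₀, hx, hx₀]
        linear_combination β * h2
      have harg := hAinj _ hzero
      have hfact : d * (x + x₀) * (x + x₀ + d) = 0 := by
        linear_combination harg + (d * x * x₀ - d ^ 3) * h2
      rcases mul_eq_zero.mp hfact with h | h
      · rcases mul_eq_zero.mp h with h' | h'
        · exact absurd h' hd
        · left; linear_combination h' - x₀ * h2
      · right; linear_combination h - x₀ * h2 - d * h2
    calc {x : F | f x + f (x + d) = β}.ncard ≤ ({x₀, x₀ + d} : Set F).ncard :=
          Set.ncard_le_ncard hsub (Set.toFinite _)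
      _ ≤ 2 := by
          apply le_trans (Set.ncard_insert_le _ _)
          simp

theorem stmt_12 (m : ℕ) (hm : 0 < m) (hodd : Odd m)
    (a b c : GaloisField 2 (2 * m))
    (ha : a + a ^ (2 ^ m) ≠ 0) (hb : b ≠ 0) (hc : c ≠ 0)
    (hcb : (c ^ 2 / b) ^ (2 ^ m) ≠ c ^ 2 / b)
    (f : GaloisField 2 (2 * m) → GaloisField 2 (2 * m))
    (hf : ∀ x, f x = a * (b * x ^ 3 + (b * x ^ 3) ^ (2 ^ m)) +
        a ^ (2 ^ m) * (c * x ^ (2 ^ (2 * m - 1) + 1) + (c * x ^ (2 ^ (2 * m - 1) + 1)) ^ (2 ^ m))) :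
    ∀ d : GaloisField 2 (2 * m), d ≠ 0 → ∀ β : GaloisField 2 (2 * m),
      {x : GaloisField 2 (2 * m) | f x + f (x + d) = β}.ncard ≤ 2 := by
  have hcard : ∀ x : GaloisField 2 (2 * m), x ^ 2 ^ (2 * m) = x := by
    have : Fintype (GaloisField 2 (2 * m)) := Fintype.ofFinite _
    intro x
    rw [← GaloisField.card 2 (2 * m) (by omega), Nat.card_eq_fintype_card]
    exact FiniteField.pow_card x
  exact apn_aux m hm hcard a b c ha hb hcb f hf
end

section
/- Let n = 2m with m odd, q = 2^m, a ∈ F_{2^n} with a + a^q ≠ 0, b a non-cube in F_{2^n}, c ∈ F_{2^n}^* with b·c ∈ F_{2^m}, and s = m + 2. Then f(x) = a·Tr^n_m(b x^3) + a^q·Tr^n_m(c x^{2^s + 1}) is an APN function over F_{2^n}. -/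
section APN
variable {m : ℕ}

local notation "K" => GaloisField 2 (2*m)

private lemma three_dvd_qp1 (hodd : Odd m) : 3 ∣ 2^m + 1 := by
  obtain ⟨r, rfl⟩ := hodd
  have h : (2:ℕ)^(2*r+1) % 3 = 2 := by
    rw [pow_succ, pow_mul, Nat.mul_mod, Nat.pow_mod]
    norm_num
  set x := (2:ℕ)^(2*r+1) with hx
  omega

private lemma Kpow_card (hm : 0 < m) (x : K) : x ^ (2^(2*m)) = x := by
  have : Fintype (GaloisField 2 (2*m)) := Fintype.ofFinite _
  have h := FiniteField.pow_card x
  rwa [← Nat.card_eq_fintype_card, GaloisField.card 2 (2*m) (by omega)] at h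

private lemma Kqq (hm : 0 < m) (x : K) : (x ^ (2^m)) ^ (2^m) = x := by
  rw [← pow_mul, ← pow_add, ← two_mul]; exact Kpow_card hm x

private lemma fr_add (x y : K) : (x+y)^(2^m) = x^(2^m)+y^(2^m) := add_pow_char_pow ..

private lemma fr_pow (x : K) (k : ℕ) : (x^k)^(2^m) = (x^(2^m))^k := by
  rw [← pow_mul, mul_comm k (2^m), pow_mul]

private lemma cube_of_pow (hm : 0 < m) (k1 : ℕ) (h3k : 3 * k1 = 2^m + 1)
    (B : K) (hB : B ≠ 0) (hE : B ^ (2^m * k1) = B ^ k1) :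
    ∃ β : K, β ^ 3 = B := by
  letI : Fintype (GaloisField 2 (2*m)) := Fintype.ofFinite _
  letI : DecidableEq (GaloisField 2 (2*m)) := Classical.decEq _
  set M := (2^m - 1) * k1 with hM
  have h2m : 2 ≤ 2^m := by
    calc 2 = 2^1 := rfl
    _ ≤ 2^m := Nat.pow_le_pow_right (by norm_num) hm
  have hk1 : 0 < k1 := by omega
  have hMpos : 0 < M := Nat.mul_pos (by omega) hk1
  have hsub : (2^m - 1) + 1 = 2^m := by omega
  have hsum : M + k1 = 2^m * k1 := by
    calc M + k1 = ((2^m-1) + 1) * k1 := by rw [hM]; ring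
    _ = 2^m * k1 := by rw [hsub]
  have hBM : B ^ M = 1 := by
    have h1 : B ^ M * B ^ k1 = 1 * B ^ k1 := by
      rw [← pow_add, hsum, hE, one_mul]
    exact mul_right_cancel₀ (pow_ne_zero _ hB) h1
  have hcard : Fintype.card (GaloisField 2 (2*m))ˣ = 3 * M := by
    rw [Fintype.card_units, ← Nat.card_eq_fintype_card, GaloisField.card 2 (2*m) (by omega)]
    have h2 : (2:ℕ)^(2*m) = 2^m * 2^m := by rw [two_mul, pow_add]
    have e : 3 * M = (2^m-1) * (3*k1) := by rw [hM]; ring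
    rw [e, h3k, h2]
    obtain ⟨A, hA⟩ := Nat.exists_eq_add_of_le h2m
    rw [hA]
    have h4 : (2 + A - 1) = A + 1 := by omega
    rw [h4]
    ring_nf
    omega
  set Bu : (GaloisField 2 (2*m))ˣ := Units.mk0 B hB with hBu
  have hBuM : Bu ^ M = 1 := by
    apply Units.ext; push_cast [hBu]; exact hBM
  obtain ⟨g, hg⟩ := IsCyclic.exists_generator (α := (GaloisField 2 (2*m))ˣ)
  obtain ⟨j, hj⟩ := hg Bu
  have hj' : g ^ j = Bu := hj
  have horder : orderOf g = 3 * M := by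
    rw [orderOf_eq_card_of_forall_mem_zpowers hg, Nat.card_eq_fintype_card, hcard]
  have hone : g ^ (j * (M:ℤ)) = 1 := by
    rw [zpow_mul, hj', zpow_natCast, hBuM]
  have hdvd : ((3 * M : ℕ) : ℤ) ∣ j * M := by
    rw [← horder]; exact orderOf_dvd_iff_zpow_eq_one.mpr hone
  have h3j : (3:ℤ) ∣ j := by
    rcases hdvd with ⟨t, ht⟩
    have hMne : (M:ℤ) ≠ 0 := by exact_mod_cast hMpos.ne'
    have h5 : (M:ℤ) * j = (M:ℤ) * (3 * t) := by push_cast at ht ⊢; linarith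
    exact ⟨t, mul_left_cancel₀ hMne h5⟩
  obtain ⟨j', rfl⟩ := h3j
  refine ⟨((g ^ j' : (GaloisField 2 (2*m))ˣ) : GaloisField 2 (2*m)), ?_⟩
  have hu : (g ^ j') ^ (3:ℕ) = Bu := by
    rw [← hj', ← zpow_natCast, ← zpow_mul]; ring_nf
  calc ((g ^ j' : (GaloisField 2 (2*m))ˣ) : GaloisField 2 (2*m)) ^ 3
      = (((g ^ j') ^ (3:ℕ) : (GaloisField 2 (2*m))ˣ) : GaloisField 2 (2*m)) := by push_cast; ring
    _ = B := by rw [hu, hBu]; rfl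

private lemma solve_quad (hm : 0 < m) (a r : K)
    (ha : a + a^(2^m) ≠ 0) (hr : r^(2^m) = r) :
    ∃ v : K, v^2 + v = r := by
  set den := a + a^(2^m) with hden
  have hdq : den^(2^m) = den := by
    rw [hden, fr_add, Kqq hm, add_comm]
  set v0 := a * r / den with hv0
  have hv : v0 + v0^(2^m) = r := by
    rw [hv0, div_pow, mul_pow, hdq, hr, ← add_div, hden]
    rw [div_eq_iff (by rw [← hden]; exact ha)]
    ring
  refine ⟨∑ i ∈ Finset.range m, v0^(2^i), ?_⟩
  have hs2 : (∑ i ∈ Finset.range m, v0^(2^i))^2 = ∑ i ∈ Finset.range m, v0^(2^(i+1)) := by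
    rw [show (∑ i ∈ Finset.range m, v0^(2^i))^2 = frobenius (GaloisField 2 (2*m)) 2 (∑ i ∈ Finset.range m, v0^(2^i)) from rfl, map_sum]
    refine Finset.sum_congr rfl fun i _ => ?_
    rw [show frobenius (GaloisField 2 (2*m)) 2 (v0^(2^i)) = (v0^(2^i))^2 from rfl, ← pow_mul, ← pow_succ]
  calc (∑ i ∈ Finset.range m, v0^(2^i))^2 + (∑ i ∈ Finset.range m, v0^(2^i))
      = (∑ i ∈ Finset.range m, v0^(2^i))^2 - (∑ i ∈ Finset.range m, v0^(2^i)) := by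
        rw [CharTwo.sub_eq_add]
    _ = ∑ i ∈ Finset.range m, (v0^(2^(i+1)) - v0^(2^i)) := by
        rw [hs2, Finset.sum_sub_distrib]
    _ = v0^(2^m) - v0^(2^0) := Finset.sum_range_sub (fun i => v0^(2^i)) m
    _ = r := by rw [CharTwo.sub_eq_add, pow_zero, pow_one]; linear_combination hv

private lemma kernel_core (hm : 0 < m) (hodd : Odd m) (a B C y : K)
    (ha : a + a^(2^m) ≠ 0)
    (hBne : ¬ ∃ β : K, β^3 = B)
    (hB0 : B ≠ 0) (hC0 : C ≠ 0)
    (hK : (B*C)^(2^m) = B*C)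
    (h1 : (B*(y^2+y))^(2^m) = B*(y^2+y))
    (h2 : (C*((y^(2^m))^4+y))^(2^m) = C*((y^(2^m))^4+y))
    (hyne : y^2 ≠ y) : False := by
  have htwo : (2 : K) = 0 := CharTwo.two_eq_zero
  obtain ⟨k1, hk1⟩ := three_dvd_qp1 hodd
  have h3k : 3 * k1 = 2^m + 1 := hk1.symm
  have hcube : B^(2^m) = B → False := by
    intro h
    exact hBne (cube_of_pow hm k1 h3k B hB0 (by rw [pow_mul, h]))
  have hwne : y^2 + y ≠ 0 := by
    intro h; apply hyne
    linear_combination h - y*htwo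
  have h1' : B^(2^m)*((y^(2^m))^2+(y^(2^m))) = B*(y^2+y) := by
    rw [← h1, mul_pow, fr_add, fr_pow]
  have h2' : C^(2^m)*(y^4+(y^(2^m))) = C*((y^(2^m))^4+y) := by
    rw [← h2, mul_pow, fr_add, fr_pow, Kqq hm]
  have hK' : B^(2^m)*C^(2^m) = B*C := by rw [← hK, mul_pow]
  by_cases hs0 : (y+y^(2^m))^2 + (y+y^(2^m)) = 0
  · have hGA : B^(2^m)*(y^2+y) = B*(y^2+y) := by
      linear_combination h1' + (B^(2^m))*hs0 + ((-1)*(B^(2^m))*(y^(2^m)) + (-1)*(B^(2^m))*(y^(2^m))^2 + (-1)*(B^(2^m))*(y^(2^m))*y)*htwo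
    exact hcube (mul_right_cancel₀ hwne hGA)
  · have hu0 : y + y^(2^m) ≠ 0 := by
      intro h; apply hs0; rw [h]; ring
    have hu1 : (y + y^(2^m)) + 1 ≠ 0 := by
      intro h; apply hs0
      have h' : y + y^(2^m) = 1 := by linear_combination h - htwo
      rw [h']; linear_combination htwo
    have hBqB : B^(2^m) ≠ B := fun h => hcube h
    have eq1 : (y^2+y)*(B+B^(2^m)) = B^(2^m)*((y+y^(2^m))^2+(y+y^(2^m))) := by
      linear_combination h1' + (B*y + B*y^2 + (-1)*(B^(2^m))*(y^(2^m)) + (-1)*(B^(2^m))*(y^(2^m))^2 + (-1)*(B^(2^m))*(y^(2^m))*y)*htwo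
    have hCG : C*(B*(y^4+y^(2^m))) = C*(B^(2^m)*((y^(2^m))^4+y)) := by
      linear_combination (-(B^(2^m)))*h2' + (y^4+y^(2^m))*hK' + (B*C*(y^(2^m)) + B*C*y^4 + (-1)*(B^(2^m))*C*(y^(2^m))^4 + (-1)*(B^(2^m))*C*y)*htwo
    have hG' : B*(y^4+y^(2^m)) = B^(2^m)*((y^(2^m))^4+y) := mul_left_cancel₀ hC0 hCG
    have eq2 : ((y^2+y)^2+(y^2+y))*(B+B^(2^m)) = B^(2^m)*(y+y^(2^m))^4 + B*(y+y^(2^m)) := by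
      linear_combination hG' + ((-1)*B*(y^(2^m)) + B*y^2 + B*y^3 + (-2)*(B^(2^m))*(y^(2^m))^3*y + (-3)*(B^(2^m))*(y^(2^m))^2*y^2 + (-2)*(B^(2^m))*(y^(2^m))*y^3 + (B^(2^m))*y + (B^(2^m))*y^2 + (B^(2^m))*y^3)*htwo
    have e3 : B*B^(2^m)*((y+y^(2^m))^2+(y+y^(2^m)))^2 = (y+y^(2^m))*(B+B^(2^m))^2 := by
      linear_combination ((y^2+y)*(B+B^(2^m)) + B^(2^m)*((y+y^(2^m))^2+(y+y^(2^m))) + (B+B^(2^m)))*eq1 + (-(B+B^(2^m)))*eq2 + ((-1)*B^2*(y^(2^m)) + (-1)*B^2*y + (-1)*B*(B^(2^m))*(y^(2^m)) + B*(B^(2^m))*(y^(2^m))^2 + B*(B^(2^m))*(y^(2^m))^3 + (3)*B*(B^(2^m))*(y^(2^m))^2*y + (2)*B*(B^(2^m))*(y^(2^m))*y + (3)*B*(B^(2^m))*(y^(2^m))*y^2 + (-1)*B*(B^(2^m))*y + B*(B^(2^m))*y^2 + B*(B^(2^m))*y^3 + (B^(2^m))^2*(y^(2^m))^2 + (B^(2^m))^2*(y^(2^m))^3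 + (3)*(B^(2^m))^2*(y^(2^m))^2*y + (2)*(B^(2^m))^2*(y^(2^m))*y + (3)*(B^(2^m))^2*(y^(2^m))*y^2 + (B^(2^m))^2*y^2 + (B^(2^m))^2*y^3)*htwo
    have e4 : B*B^(2^m)*((y+y^(2^m))*((y+y^(2^m))+1)^2) = (B+B^(2^m))^2 := by
      apply mul_left_cancel₀ hu0
      linear_combination e3
    have huq : (y+y^(2^m))^(2^m) = y + y^(2^m) := by rw [fr_add, Kqq hm, add_comm]
    have hrq : (((y+y^(2^m))^2)⁻¹)^(2^m) = ((y+y^(2^m))^2)⁻¹ := by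
      rw [inv_pow, fr_pow, huq]
    obtain ⟨v, hv⟩ := solve_quad hm a _ ha hrq
    obtain ⟨s, hsdef⟩ : ∃ t : K, t = (y + y^(2^m)) * v := ⟨_, rfl⟩
    have hs : s^2 + (y+y^(2^m))*s + 1 = 0 := by
      have h6 : (y+y^(2^m))^2 * (v^2+v) = (y+y^(2^m))^2 * ((y+y^(2^m))^2)⁻¹ := by rw [hv]
      have h7 : (y+y^(2^m))^2 * ((y+y^(2^m))^2)⁻¹ = 1 := mul_inv_cancel₀ (pow_ne_zero 2 hu0)
      linear_combination h6 + h7 + (s + (y+y^(2^m))*v + (y+y^(2^m)))*hsdef + htwo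
    have hsne : s ≠ 0 := by
      intro h; rw [h] at hs; norm_num at hs
    have hroot : (s^(2^m))^2 + (y+y^(2^m))*(s^(2^m)) + 1 = 0 := by
      have h8 := congrArg (·^(2^m)) hs
      rw [fr_add, fr_add, mul_pow, fr_pow, huq, one_pow, zero_pow (Nat.two_pow_pos m).ne'] at h8
      exact h8
    have hfac : (s^(2^m) + s)*(s^(2^m) + s + (y+y^(2^m))) = 0 := by
      linear_combination hroot + hs + ((s^(2^m))*s - 1)*htwo
    have hprod : (B*s^3 + B^(2^m))*(B^(2^m)*s^3 + B) = 0 := by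
      linear_combination (-(s^3))*e4 + (B*(B^(2^m)) + B*(B^(2^m))*(y^(2^m))^2*s^2 + B*(B^(2^m))*(y^(2^m))*s + B*(B^(2^m))*(y^(2^m))*s^3 + (2)*B*(B^(2^m))*(y^(2^m))*s^2*y + B*(B^(2^m))*s^2 + B*(B^(2^m))*s^4 + B*(B^(2^m))*s^3*y + B*(B^(2^m))*s^2*y^2 + B*(B^(2^m))*s*y)*hs + ((-1)*B*(B^(2^m))*(y^(2^m))^2*s^2 + B*(B^(2^m))*(y^(2^m))^2*s^3 + (-1)*B*(B^(2^m))*(y^(2^m))^2*s^4 + (-1)*B*(B^(2^m))*(y^(2^m))*s + (-1)*B*(B^(2^m))*(y^(2^m))*s^3 + (-1)*B*(B^(2^m))*(y^(2^m))*s^5 + (-2)*B*(B^(2^m))*(y^(2^m))*s^4*y + (2)*B*(B^(2^m))*(y^(2^m))*s^3*y + (-2)*B*(B^(2^m))*(y^(2^m))*s^2*y + (-1)*B*(B^(2^m))*s^2 + (-1)*B*(B^(2^m))*s^3 + (-1)*B*(B^(2^m))*s^4 + (-1)*B*(B^(2^m))*s^5*y + (-1)*B*(B^(2^m))*s^4*y^2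 + (-1)*B*(B^(2^m))*s^3*y + B*(B^(2^m))*s^3*y^2 + (-1)*B*(B^(2^m))*s^2*y^2 + (-1)*B*(B^(2^m))*s*y)*htwo
    have hBq3 : B^(2^m) = B*s^3 ∨ B = B^(2^m)*s^3 := by
      rcases mul_eq_zero.mp hprod with h9 | h9
      · left; linear_combination h9 - (B*s^3)*htwo
      · right; linear_combination h9 - (B^(2^m)*s^3)*htwo
    rcases mul_eq_zero.mp hfac with hq | hq
    · have hS : s^(2^m) = s := by linear_combination hq - s*htwo
      have h14 : s^3 = 1 → False := by
        intro h14
        rcases hBq3 with h10 | h10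
        · rw [h14, mul_one] at h10; exact hBqB h10
        · rw [h14, mul_one] at h10; exact hBqB h10.symm
      apply h14
      have h13 : s^6 = 1 := by
        rcases hBq3 with h10 | h10
        · have h11 : (B^(2^m))^(2^m) = (B*s^3)^(2^m) := by rw [← h10]
          rw [Kqq hm, mul_pow, fr_pow, hS] at h11
          have h12 : B * s^6 = B * 1 := by linear_combination -h11 - s^3*h10
          exact mul_left_cancel₀ hB0 h12
        · have h11 : B^(2^m) = (B^(2^m)*s^3)^(2^m) := by rw [← h10]
          rw [mul_pow, Kqq hm, fr_pow, hS] at h11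
          have h12 : B * s^6 = B * 1 := by linear_combination -h10 - s^3*h11
          exact mul_left_cancel₀ hB0 h12
      have h15 : (s^3+1)^2 = 0 := by linear_combination h13 + (s^3+1)*htwo
      have h16 : s^3 + 1 = 0 := by
        exact pow_eq_zero_iff two_ne_zero |>.mp h15
      linear_combination h16 - htwo
    · have hSu : s^(2^m) = s + (y+y^(2^m)) := by
        linear_combination hq - (s + (y+y^(2^m)))*htwo
      have hsq1 : s^(2^m) * s = 1 := by linear_combination s*hSu + hs - htwo
      have hpow1 : s^(2^m + 1) = 1 := by rw [pow_succ]; exact hsq1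
      have hs3k : (s^3)^k1 = 1 := by rw [← pow_mul, h3k, hpow1]
      rcases hBq3 with h10 | h10
      · have h11 : (B^(2^m))^k1 = (B*s^3)^k1 := by rw [h10]
        rw [mul_pow, hs3k, mul_one, ← pow_mul] at h11
        exact hBne (cube_of_pow hm k1 h3k B hB0 h11)
      · have h11 : B^k1 = (B^(2^m)*s^3)^k1 := by rw [← h10]
        rw [mul_pow, hs3k, mul_one, ← pow_mul] at h11
        exact hBne (cube_of_pow hm k1 h3k B hB0 h11.symm)

private lemma trace_fixed (hm : 0 < m) (t : K) : (t + t^(2^m))^(2^m) = t + t^(2^m) := by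
  rw [fr_add, Kqq hm, add_comm]

private lemma split_trace (hm : 0 < m) (a S1 S2 : K) (ha : a + a^(2^m) ≠ 0)
    (h1 : S1^(2^m) = S1) (h2 : S2^(2^m) = S2) (h : a*S1 + a^(2^m)*S2 = 0) :
    S1 = 0 ∧ S2 = 0 := by
  have htwo : (2 : K) = 0 := CharTwo.two_eq_zero
  have hq : (a*S1 + a^(2^m)*S2)^(2^m) = 0^(2^m) := by rw [h]
  rw [fr_add, mul_pow, mul_pow, Kqq hm, h1, h2, zero_pow (Nat.two_pow_pos m).ne'] at hq
  have hS12 : S2 = S1 := by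
    have h5 : (a + a^(2^m))*(S1 + S2) = 0 := by linear_combination h + hq
    rcases mul_eq_zero.mp h5 with h6 | h6
    · exact absurd h6 ha
    · linear_combination h6 - S1*htwo
  have hS1 : S1 = 0 := by
    rw [hS12] at h
    have h7 : (a + a^(2^m)) * S1 = 0 := by linear_combination h
    rcases mul_eq_zero.mp h7 with h6 | h6
    · exact absurd h6 ha
    · exact h6
  exact ⟨hS1, by rw [hS12, hS1]⟩

private lemma pow_q4 (x : K) : x^(2^(m+2)+1) = (x^(2^m))^4 * x := by
  rw [pow_succ]
  congr 1
  rw [show (2:ℕ)^(m+2) = 2^m*4 by rw [pow_add]; norm_num, pow_mul]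

end APN

theorem stmt_13 (m : ℕ) (hm : 0 < m) (hodd : Odd m)
    (a b c : GaloisField 2 (2 * m))
    (ha : a + a ^ (2 ^ m) ≠ 0)
    (hb : ¬ ∃ β : GaloisField 2 (2 * m), β ^ 3 = b)
    (hc : c ≠ 0)
    (hbc : (b * c) ^ (2 ^ m) = b * c)
    (f : GaloisField 2 (2 * m) → GaloisField 2 (2 * m))
    (hf : ∀ x, f x = a * (b * x ^ 3 + (b * x ^ 3) ^ (2 ^ m)) +
        a ^ (2 ^ m) * (c * x ^ (2 ^ (m + 2) + 1) + (c * x ^ (2 ^ (m + 2) + 1)) ^ (2 ^ m))) :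
    ∀ d : GaloisField 2 (2 * m), d ≠ 0 → ∀ β : GaloisField 2 (2 * m),
      {x : GaloisField 2 (2 * m) | f x + f (x + d) = β}.ncard ≤ 2 := by
  intro d hd β
  have htwo : (2 : GaloisField 2 (2*m)) = 0 := CharTwo.two_eq_zero
  have hb0 : b ≠ 0 := by rintro rfl; exact hb ⟨0, by norm_num⟩
  rcases Set.eq_empty_or_nonempty {x : GaloisField 2 (2*m) | f x + f (x + d) = β} with he | ⟨x₀, hx₀⟩
  · rw [he, Set.ncard_empty]; norm_num
  · have hsub : {x : GaloisField 2 (2*m) | f x + f (x + d) = β} ⊆ {x₀, x₀+d} := by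
      intro x' hx'
      simp only [Set.mem_setOf_eq] at hx' hx₀
      have h := hx₀.trans hx'.symm
      rw [hf x₀, hf (x₀+d), hf x', hf (x'+d)] at h
      simp only [pow_q4, mul_pow, fr_add, fr_pow, Kqq hm] at h
      have e1 : (b*(d*(x₀+x')^2 + d^2*(x₀+x')))^(2^m)
          = b^(2^m)*(d^(2^m)*(x₀^(2^m)+x'^(2^m))^2 + (d^(2^m))^2*(x₀^(2^m)+x'^(2^m))) := by
        simp only [mul_pow, fr_add, fr_pow]
      have e2 : (c*((d^(2^m))^4*(x₀+x') + d*((x₀+x')^(2^m))^4))^(2^m)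
          = c^(2^m)*(d^4*(x₀^(2^m)+x'^(2^m)) + d^(2^m)*(x₀+x')^4) := by
        simp only [mul_pow, fr_add, fr_pow, Kqq hm]
      have key : a*((b*(d*(x₀+x')^2 + d^2*(x₀+x'))) + (b*(d*(x₀+x')^2 + d^2*(x₀+x')))^(2^m))
          + a^(2^m)*((c*((d^(2^m))^4*(x₀+x') + d*((x₀+x')^(2^m))^4)) + (c*((d^(2^m))^4*(x₀+x') + d*((x₀+x')^(2^m))^4))^(2^m)) = 0 := by
        rw [e1, e2]
        simp only [fr_add]
        linear_combination h + ((-1)*(x₀^(2^m))^4*(a^(2^m))*c*x₀ + (2)*(x₀^(2^m))^3*(x'^(2^m))*(a^(2^m))*c*d + (-1)*(x₀^(2^m))^3*a*(b^(2^m)) + (-2)*(x₀^(2^m))^3*(a^(2^m))*c*d*(d^(2^m)) + (-2)*(x₀^(2^m))^3*(a^(2^m))*c*(d^(2^m))*x₀ + (3)*(x₀^(2^m))^2*(x'^(2^m))^2*(a^(2^m))*c*d + (-1)*(x₀^(2^m))^2*a*(b^(2^m))*(d^(2^m)) + (-3)*(x₀^(2^m))^2*(a^(2^m))*c*d*(d^(2^m))^2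 + (-3)*(x₀^(2^m))^2*(a^(2^m))*c*(d^(2^m))^2*x₀ + (2)*(x₀^(2^m))*(x'^(2^m))^3*(a^(2^m))*c*d + (x₀^(2^m))*(x'^(2^m))*a*(b^(2^m))*(d^(2^m)) + (-1)*(x₀^(2^m))*a*(b^(2^m))*(d^(2^m))^2 + (-2)*(x₀^(2^m))*(a^(2^m))*c*d*(d^(2^m))^3 + (-2)*(x₀^(2^m))*(a^(2^m))*c*(d^(2^m))^3*x₀ + (-2)*(x₀^(2^m))*(a^(2^m))*(c^(2^m))*d^3*x₀ + (-3)*(x₀^(2^m))*(a^(2^m))*(c^(2^m))*d^2*x₀^2 + (-2)*(x₀^(2^m))*(a^(2^m))*(c^(2^m))*d*x₀^3 + (-1)*(x₀^(2^m))*(a^(2^m))*(c^(2^m))*x₀^4 + (x'^(2^m))^4*(a^(2^m))*c*d + (x'^(2^m))^4*(a^(2^m))*c*x' + (x'^(2^m))^3*a*(b^(2^m)) + (2)*(x'^(2^m))^3*(a^(2^m))*c*d*(d^(2^m)) + (2)*(x'^(2^m))^3*(a^(2^m))*c*(d^(2^m))*x' + (2)*(x'^(2^m))^2*a*(b^(2^m))*(d^(2^m))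 + (3)*(x'^(2^m))^2*(a^(2^m))*c*d*(d^(2^m))^2 + (3)*(x'^(2^m))^2*(a^(2^m))*c*(d^(2^m))^2*x' + (2)*(x'^(2^m))*a*(b^(2^m))*(d^(2^m))^2 + (2)*(x'^(2^m))*(a^(2^m))*c*d*(d^(2^m))^3 + (2)*(x'^(2^m))*(a^(2^m))*c*(d^(2^m))^3*x' + (x'^(2^m))*(a^(2^m))*(c^(2^m))*d^4 + (2)*(x'^(2^m))*(a^(2^m))*(c^(2^m))*d^3*x' + (3)*(x'^(2^m))*(a^(2^m))*(c^(2^m))*d^2*x'^2 + (2)*(x'^(2^m))*(a^(2^m))*(c^(2^m))*d*x'^3 + (x'^(2^m))*(a^(2^m))*(c^(2^m))*x'^4 + (-1)*a*b*d^2*x₀ + (2)*a*b*d^2*x' + (-1)*a*b*d*x₀^2 + a*b*d*x₀*x' + (2)*a*b*d*x'^2 + (-1)*a*b*x₀^3 + a*b*x'^3 + (a^(2^m))*c*(d^(2^m))^4*x' + (-2)*(a^(2^m))*(c^(2^m))*d^3*(d^(2^m))*x₀ + (2)*(a^(2^m))*(c^(2^m))*d^3*(d^(2^m))*x' + (-3)*(a^(2^m))*(c^(2^m))*d^2*(d^(2^m))*x₀^2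 + (3)*(a^(2^m))*(c^(2^m))*d^2*(d^(2^m))*x'^2 + (-2)*(a^(2^m))*(c^(2^m))*d*(d^(2^m))*x₀^3 + (2)*(a^(2^m))*(c^(2^m))*d*(d^(2^m))*x'^3 + (2)*(a^(2^m))*(c^(2^m))*(d^(2^m))*x₀^3*x' + (3)*(a^(2^m))*(c^(2^m))*(d^(2^m))*x₀^2*x'^2 + (2)*(a^(2^m))*(c^(2^m))*(d^(2^m))*x₀*x'^3 + (a^(2^m))*(c^(2^m))*(d^(2^m))*x'^4)*htwo
      obtain ⟨hW1, hW2⟩ := split_trace hm a _ _ ha (trace_fixed hm _) (trace_fixed hm _) key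
      simp only [Set.mem_insert_iff, Set.mem_singleton_iff]
      by_cases hz0 : x₀ + x' = 0
      · left; linear_combination hz0 - x₀*htwo
      · by_cases hzd : x₀ + x' = d
        · right; linear_combination hzd - x₀*htwo
        · exfalso
          obtain ⟨y, hzy⟩ : ∃ t : GaloisField 2 (2*m), x₀ + x' = d*t := ⟨(x₀+x')/d, by field_simp⟩
          have hyne : y^2 ≠ y := by
            intro hy
            have h9 : y*(y-1) = 0 := by linear_combination hy
            rcases mul_eq_zero.mp h9 with h10 | h10
            · exact hz0 (by rw [hzy, h10, mul_zero])
            · have h11 : y = 1 := by linear_combination h10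
              exact hzd (by rw [hzy, h11, mul_one])
          have hBne : ¬ ∃ γ : GaloisField 2 (2*m), γ^3 = b*d^3 := by
            rintro ⟨γ, hγ⟩
            refine hb ⟨γ/d, ?_⟩
            rw [div_pow, hγ, mul_div_cancel_right₀ _ (pow_ne_zero 3 hd)]
          have hB0 : b*d^3 ≠ 0 := mul_ne_zero hb0 (pow_ne_zero 3 hd)
          have hC0 : c*d*(d^(2^m))^4 ≠ 0 :=
            mul_ne_zero (mul_ne_zero hc hd) (pow_ne_zero _ (pow_ne_zero _ hd))
          have hKk : ((b*d^3)*(c*d*(d^(2^m))^4))^(2^m) = (b*d^3)*(c*d*(d^(2^m))^4) := by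
            have hbc' : b^(2^m)*c^(2^m) = b*c := by rw [← mul_pow]; exact hbc
            simp only [mul_pow, fr_pow, Kqq hm]
            linear_combination (d^4*(d^(2^m))^4)*hbc'
          have h1k : ((b*d^3)*(y^2+y))^(2^m) = (b*d^3)*(y^2+y) := by
            have hW1e : b*(d*(x₀+x')^2 + d^2*(x₀+x')) = (b*d^3)*(y^2+y) := by rw [hzy]; ring
            rw [← hW1e]
            linear_combination hW1 - (b*(d*(x₀+x')^2 + d^2*(x₀+x')))*htwo
          have h2k : ((c*d*(d^(2^m))^4)*((y^(2^m))^4+y))^(2^m) = (c*d*(d^(2^m))^4)*((y^(2^m))^4+y) := by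
            have hW2e : c*((d^(2^m))^4*(x₀+x') + d*((x₀+x')^(2^m))^4) = (c*d*(d^(2^m))^4)*((y^(2^m))^4+y) := by
              rw [hzy, mul_pow]; ring
            rw [← hW2e]
            linear_combination hW2 - (c*((d^(2^m))^4*(x₀+x') + d*((x₀+x')^(2^m))^4))*htwo
          exact kernel_core hm hodd a (b*d^3) (c*d*(d^(2^m))^4) y ha hBne hB0 hC0 hKk h1k h2k hyne
    have hne : x₀ ≠ x₀ + d := by
      intro h; exact hd (by linear_combination -h)
    calc {x : GaloisField 2 (2*m) | f x + f (x + d) = β}.ncard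
        ≤ ({x₀, x₀+d} : Set (GaloisField 2 (2*m))).ncard := Set.ncard_le_ncard hsub (Set.toFinite _)
      _ ≤ 2 := le_of_eq (Set.ncard_pair hne)
end

section
/- (Williams) Let n = 2m and a ∈ F_{2^n}^* with Tr^n_1(1/a^2) = 0, and let t_1 ∈ F_{2^n} be a solution of t^2 + a t + 1 = 0. Then the polynomial f(x) = x^3 + x + a has no zeros in F_{2^n} if and only if t_1 is not a cube in F_{2^n}, and f has three zeros in F_{2^n} if and only if t_1 is a cube in F_{2^n}. -/
set_option linter.unusedSectionVars false
set_option maxHeartbeats 1000000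
open Finset Polynomial
section helpers
variable {F : Type*} [Field F] [Fintype F] [DecidableEq F]

def trS (n : ℕ) (x : F) : F := ∑ i ∈ Finset.range n, x ^ 2 ^ i

variable [CharP F 2]

lemma trS_add (n : ℕ) (x y : F) : trS n (x + y) = trS n x + trS n y := by
  unfold trS
  rw [← Finset.sum_add_distrib]
  exact Finset.sum_congr rfl fun i _ => add_pow_char_pow ..

lemma pow_card_eq {n : ℕ} (hcard : Fintype.card F = 2 ^ n) (x : F) : x ^ 2 ^ n = x := by
  rw [← hcard]; exact FiniteField.pow_card x

lemma trS_sq {n : ℕ} (hcard : Fintype.card F = 2 ^ n) (x : F) :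
    trS n (x ^ 2) = trS n x := by
  have key : ∀ i : ℕ, (x ^ 2) ^ 2 ^ i = x ^ 2 ^ (i + 1) := by
    intro i
    rw [← pow_mul, pow_succ, mul_comm (2 ^ i) 2, pow_mul]
  have h1 : trS n (x ^ 2) = ∑ i ∈ Finset.range n, x ^ 2 ^ (i + 1) := by
    unfold trS; exact Finset.sum_congr rfl fun i _ => key i
  have h2 := Finset.sum_range_succ' (fun i => x ^ 2 ^ i) n
  have h3 := Finset.sum_range_succ (fun i => x ^ 2 ^ i) n
  rw [h3] at h2
  rw [h1]
  have h4 : x ^ 2 ^ n = x := pow_card_eq hcard x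
  rw [h4] at h2
  simp only [pow_zero, pow_one] at h2
  unfold trS
  exact (add_right_cancel h2).symm

lemma artin_schreier {n : ℕ} (hn : n ≠ 0) (hcard : Fintype.card F = 2 ^ n) (c : F)
    (hc : trS n c = 0) : ∃ v : F, v ^ 2 + v = c := by
  have h2 : (2 : F) = 0 := by
    have := CharP.cast_eq_zero F 2; exact_mod_cast this
  set φ : F → F := fun v => v ^ 2 + v with hφ
  set S : Finset F := Finset.image φ Finset.univ with hS
  set K : Finset F := Finset.univ.filter (fun c : F => trS n c = 0) with hK
  have hSK : S ⊆ K := by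
    intro s hs
    simp only [hS, Finset.mem_image] at hs
    obtain ⟨v, -, rfl⟩ := hs
    simp only [hK, Finset.mem_filter, Finset.mem_univ, true_and]
    show trS n (v ^ 2 + v) = 0
    rw [trS_add, trS_sq hcard]
    rw [CharTwo.add_self_eq_zero]
  -- polynomial bound on K
  set Pl : F[X] := ∑ i ∈ Finset.range n, X ^ 2 ^ i with hPl
  have hev : ∀ x : F, Pl.eval x = trS n x := by
    intro x
    simp [hPl, trS, Polynomial.eval_finset_sum]
  have hPl0 : Pl ≠ 0 := by
    intro h
    have hco : Pl.coeff (2 ^ (n - 1)) = 1 := by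
      rw [hPl, Polynomial.finset_sum_coeff]
      rw [Finset.sum_eq_single (n - 1)]
      · rw [Polynomial.coeff_X_pow, if_pos rfl]
      · intro i hi hne
        rw [Polynomial.coeff_X_pow, if_neg]
        intro hEq
        exact hne (Nat.pow_right_injective (le_refl 2) hEq.symm)
      · intro hmem
        exact absurd (Finset.mem_range.2 (by omega)) hmem
    rw [h] at hco
    simp at hco
  have hdeg : Pl.natDegree ≤ 2 ^ (n - 1) := by
    rw [hPl]
    apply Polynomial.natDegree_sum_le_of_forall_le
    intro i hi
    rw [Polynomial.natDegree_X_pow]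
    exact Nat.pow_le_pow_right (by norm_num) (by simp at hi; omega)
  have hKcard : K.card ≤ 2 ^ (n - 1) := by
    have hsub : K ⊆ Pl.roots.toFinset := by
      intro x hx
      simp only [hK, Finset.mem_filter, Finset.mem_univ, true_and] at hx
      rw [Multiset.mem_toFinset, Polynomial.mem_roots hPl0, Polynomial.IsRoot, hev]
      exact hx
    calc K.card ≤ Pl.roots.toFinset.card := Finset.card_le_card hsub
      _ ≤ Multiset.card Pl.roots := Multiset.toFinset_card_le _
      _ ≤ Pl.natDegree := Polynomial.card_roots' Pl
      _ ≤ 2 ^ (n - 1) := hdeg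
  -- fiber bound on φ
  have hScard : 2 ^ n ≤ 2 * S.card := by
    have := Finset.card_le_mul_card_image (f := φ) Finset.univ 2 ?_
    · rwa [Finset.card_univ, hcard] at this
    · intro b hb
      simp only [Finset.mem_image] at hb
      obtain ⟨v₀, -, hv₀⟩ := hb
      have hsub : Finset.univ.filter (fun x : F => φ x = b) ⊆ {v₀, v₀ + 1} := by
        intro v hv
        simp only [Finset.mem_filter, Finset.mem_univ, true_and] at hv
        have hvv : v ^ 2 + v = v₀ ^ 2 + v₀ := by rw [hφ] at hv hv₀; dsimp at hv hv₀; rw [hv, ← hv₀]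
        have : (v - v₀) * (v - v₀ - 1) = 0 := by
          linear_combination hvv + (v₀ ^ 2 - v * v₀ - v + v₀) * h2
        rcases mul_eq_zero.1 this with h | h
        · simp [sub_eq_zero.1 h]
        · have : v = v₀ + 1 := by linear_combination h
          simp [this]
      calc (Finset.univ.filter (fun x : F => φ x = b)).card ≤ ({v₀, v₀ + 1} : Finset F).card :=
            Finset.card_le_card hsub
        _ ≤ 2 := Finset.card_insert_le _ _ |>.trans (by simp)
  have hcardle : K.card ≤ S.card := by
    have h2n : 2 ^ n = 2 * 2 ^ (n - 1) := by
      conv_lhs => rw [show n = (n - 1) + 1 by omega]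
      ring
    omega
  have hEq : S = K := Finset.eq_of_subset_of_card_le hSK hcardle
  have hcK : c ∈ K := by simp [hK, hc]
  rw [← hEq] at hcK
  simp only [hS, Finset.mem_image] at hcK
  obtain ⟨v, -, hv⟩ := hcK
  exact ⟨v, hv⟩

lemma exists_omega {k : ℕ} (hk : k ≠ 0) (hcard : Fintype.card F = 2 ^ (2 * k)) :
    ∃ ω : F, ω ^ 3 = 1 ∧ ω ≠ 1 := by
  haveI : Fact (Nat.Prime 3) := ⟨by norm_num⟩
  have h3 : (3 : ℕ) ∣ Fintype.card Fˣ := by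
    rw [Fintype.card_units, hcard]
    have h4 : (2 : ℕ) ^ (2 * k) = 4 ^ k := by rw [pow_mul]; norm_num
    rw [h4]
    clear hcard h4
    induction k with
    | zero => simp
    | succ k ih =>
      rcases Nat.eq_zero_or_pos k with rfl | hk'
      · norm_num
      · have ihh := ih (by omega)
        have h5 : (4 : ℕ) ^ (k + 1) - 1 = 4 * (4 ^ k - 1) + 3 := by
          have : (1 : ℕ) ≤ 4 ^ k := Nat.one_le_pow _ _ (by norm_num)
          rw [pow_succ]
          omega
        rw [h5]
        exact Nat.dvd_add (Dvd.dvd.mul_left ihh 4) dvd_rfl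
  obtain ⟨ζ, hζ⟩ := exists_prime_orderOf_dvd_card 3 h3
  refine ⟨(ζ : F), ?_, ?_⟩
  · have := pow_orderOf_eq_one ζ
    rw [hζ] at this
    rw [← Units.val_pow_eq_pow_val, this, Units.val_one]
  · intro h
    have hζ1 : ζ = 1 := Units.ext (by simp [h])
    rw [hζ1, orderOf_one] at hζ
    norm_num at hζ

end helpers

theorem stmt_14 (m : ℕ) (hm : 0 < m) (a : GaloisField 2 (2 * m)) (ha : a ≠ 0)
    (htr : ∑ i ∈ Finset.range (2 * m), (1 / a ^ 2) ^ (2 ^ i) = 0)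
    (t₁ : GaloisField 2 (2 * m)) (ht₁ : t₁ ^ 2 + a * t₁ + 1 = 0) :
    ((¬ ∃ y : GaloisField 2 (2 * m), y ^ 3 + y + a = 0) ↔
        ¬ ∃ β : GaloisField 2 (2 * m), β ^ 3 = t₁) ∧
      (({y : GaloisField 2 (2 * m) | y ^ 3 + y + a = 0}.ncard = 3) ↔
        ∃ β : GaloisField 2 (2 * m), β ^ 3 = t₁) := by
  classical
  have hn : 2 * m ≠ 0 := by omega
  haveI : Fintype (GaloisField 2 (2 * m)) := Fintype.ofFinite _
  have hcard : Fintype.card (GaloisField 2 (2 * m)) = 2 ^ (2 * m) := by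
    rw [← Nat.card_eq_fintype_card, GaloisField.card 2 (2 * m) hn]
  have h2 : (2 : GaloisField 2 (2 * m)) = 0 := by
    have := CharP.cast_eq_zero (GaloisField 2 (2 * m)) 2; exact_mod_cast this
  have ht0 : t₁ ≠ 0 := by intro h; rw [h] at ht₁; simp at ht₁
  have ht1ne1 : t₁ ≠ 1 := by
    intro h; rw [h] at ht₁; exact ha (by linear_combination ht₁ - h2)
  have htr' : trS (2 * m) (1 / a ^ 2) = 0 := htr
  -- root gives u
  have root_to_u : ∀ y : GaloisField 2 (2 * m), y ^ 3 + y + a = 0 →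
      ∃ u : GaloisField 2 (2 * m), u ≠ 0 ∧ u ^ 2 + y * u + 1 = 0 ∧
        (u ^ 3 = t₁ ∨ u ^ 3 = t₁⁻¹) := by
    intro y hy
    have hy0 : y ≠ 0 := by
      intro h; rw [h] at hy; exact ha (by linear_combination hy)
    have hy1 : y + 1 ≠ 0 := by
      intro h
      exact ha (by linear_combination hy - (y ^ 2 + y) * h + y ^ 2 * h2)
    have hpf : (1 : GaloisField 2 (2 * m)) / a ^ 2
        = 1 / y ^ 2 + 1 / (y + 1) ^ 2 + (1 / (y + 1) ^ 2) ^ 2 := by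
      field_simp
      have ha' : a = y ^ 3 + y := by linear_combination hy - (y ^ 3 + y) * h2
      rw [ha']
      linear_combination (-y^2*(y^8+3*y^7+5*y^6+8*y^5+7*y^4+5*y^3+y^2) - (y^4+2*y^6+y^8)) * h2
    have htry : trS (2 * m) (1 / y ^ 2) = 0 := by
      rw [hpf, trS_add, trS_add, trS_sq hcard] at htr'
      linear_combination htr' - trS (2 * m) (1 / (y + 1) ^ 2) * h2
    obtain ⟨v, hv⟩ := artin_schreier hn hcard _ htry
    have hg : y ^ 2 * (v ^ 2 + v) = 1 := by rw [hv]; field_simp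
    have hu : (y * v) ^ 2 + y * (y * v) + 1 = 0 := by linear_combination hg + h2
    have hu0 : y * v ≠ 0 := by
      intro h; rw [h] at hu; simp at hu
    refine ⟨y * v, hu0, hu, ?_⟩
    set u := y * v with hu_def
    have hu6 : u ^ 6 + a * u ^ 3 + 1 = 0 := by
      linear_combination (1 + y*a + y^2 + y^4 + u*a + u*y^3 + u^2 + u^2*y^2 + u^3*y + u^4) * hu
        + (y + u + u*y^2) * hy
        + (-1*y*a + -1*y^2 + -1*y^4 + -1*u*a + -1*u*y + -1*u*y^2*a + -2*u*y^3 + -1*u*y^5 + -1*u^2 + -1*u^2*y*a + -1*u^2*y^2 + -1*u^2*y^4 + -1*u^3*y + -1*u^3*y^3 + -1*u^4 + -1*u^4*y^2 + -1*u^5*y) * h2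
    have hfac : (u ^ 3 + t₁) * (t₁ * u ^ 3 + 1) = 0 := by
      linear_combination t₁ * hu6 + u ^ 3 * ht₁ + (-1 * u^3 * a * t₁) * h2
    rcases mul_eq_zero.1 hfac with h | h
    · left; linear_combination h - t₁ * h2
    · right
      have hmul : t₁ * u ^ 3 = 1 := by linear_combination h - h2
      exact eq_inv_of_mul_eq_one_left (by linear_combination hmul)
  -- y from u
  have u_to_y : ∀ y u : GaloisField 2 (2 * m), u ≠ 0 → u ^ 2 + y * u + 1 = 0 →
      y = u + u⁻¹ := by
    intro y u hu0 hu
    field_simp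
    linear_combination (-1 : GaloisField 2 (2*m)) * hu + y * u * h2
  -- cube root gives root of f
  have cube_to_root : ∀ β : GaloisField 2 (2 * m), β ^ 3 = t₁ →
      (β + β⁻¹) ^ 3 + (β + β⁻¹) + a = 0 := by
    intro β hb
    have hb0 : β ≠ 0 := by
      intro h; rw [h] at hb; exact ht0 (by rw [← hb]; norm_num)
    field_simp
    linear_combination ht₁ + (β^3 + t₁ + a) * hb + (2*β^4 + 2*β^2) * h2
  -- cube roots of unity
  obtain ⟨ω, hw3, hw1⟩ := exists_omega (show m ≠ 0 by omega) hcard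
  have hw0 : ω ≠ 0 := by intro h; rw [h] at hw3; norm_num at hw3
  have hws : ω ^ 2 + ω + 1 = 0 := by
    have hfac : (ω - 1) * (ω ^ 2 + ω + 1) = 0 := by linear_combination hw3
    rcases mul_eq_zero.1 hfac with h | h
    · exact absurd (sub_eq_zero.1 h) hw1
    · exact h
  have hw2ne1 : ω ^ 2 ≠ 1 := by
    intro h
    apply hw1
    calc ω = ω * ω ^ 2 := by rw [h, mul_one]
      _ = ω ^ 3 := by ring
      _ = 1 := hw3
  have cube_roots : ∀ z : GaloisField 2 (2 * m), z ^ 3 = 1 → z = 1 ∨ z = ω ∨ z = ω ^ 2 := by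
    intro z hz
    have hfac : (z + 1) * ((z + ω) * (z + ω ^ 2)) = 0 := by
      linear_combination hz + (1 + z^2 + ω + ω*z) * hws + (-1*ω + -1*ω^2) * h2
    rcases mul_eq_zero.1 hfac with h | h
    · left; linear_combination h - h2
    · rcases mul_eq_zero.1 h with h | h
      · right; left; linear_combination h - ω * h2
      · right; right; linear_combination h - ω^2 * h2
  have gdist : ∀ c d : GaloisField 2 (2 * m), c ≠ 0 → d ≠ 0 → c ^ 3 = t₁ → d ^ 3 = t₁ →
      c + c⁻¹ = d + d⁻¹ → c = d := by
    intro c d hc hd hc3 hd3 hg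
    have hic : c⁻¹ * c = 1 := inv_mul_cancel₀ hc
    have hid : d⁻¹ * d = 1 := inv_mul_cancel₀ hd
    have hg2 : (c + c⁻¹) * (c * d) = (d + d⁻¹) * (c * d) := by rw [hg]
    have hfac : (c - d) * (c * d - 1) = 0 := by
      linear_combination hg2 + d * hic - c * hid + (c*d*d⁻¹ - c*d*c⁻¹ - c + d) * h2
    rcases mul_eq_zero.1 hfac with h | h
    · exact sub_eq_zero.1 h
    · exfalso
      have hcd : c * d = 1 := by linear_combination h
      have ht2 : t₁ ^ 2 = 1 := by
        have hcd3 : t₁ ^ 2 = (c * d) ^ 3 := by rw [mul_pow, hc3, hd3]; ring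
        rw [hcd3, hcd, one_pow]
      have hsq : (t₁ - 1) ^ 2 = 0 := by linear_combination ht2 + (1 - t₁) * h2
      exact ht1ne1 (sub_eq_zero.1 (sq_eq_zero_iff.1 hsq))
  -- main equivalence
  have iff1 : (∃ y : GaloisField 2 (2 * m), y ^ 3 + y + a = 0) ↔
      (∃ β : GaloisField 2 (2 * m), β ^ 3 = t₁) := by
    constructor
    · rintro ⟨y, hy⟩
      obtain ⟨u, hu0, hu, hcase⟩ := root_to_u y hy
      rcases hcase with h | h
      · exact ⟨u, h⟩
      · exact ⟨u⁻¹, by rw [inv_pow, h, inv_inv]⟩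
    · rintro ⟨β, hb⟩
      exact ⟨β + β⁻¹, cube_to_root β hb⟩
  have count : (∃ β : GaloisField 2 (2 * m), β ^ 3 = t₁) →
      {y : GaloisField 2 (2 * m) | y ^ 3 + y + a = 0}.ncard = 3 := by
    rintro ⟨β, hb⟩
    have hb0 : β ≠ 0 := by intro h; rw [h] at hb; exact ht0 (by rw [← hb]; norm_num)
    have hb1 : (ω * β) ^ 3 = t₁ := by rw [mul_pow, hw3, one_mul, hb]
    have hb2 : (ω ^ 2 * β) ^ 3 = t₁ := by
      rw [mul_pow, show ((ω : GaloisField 2 (2 * m)) ^ 2) ^ 3 = (ω ^ 3) ^ 2 by ring,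
        hw3, one_pow, one_mul, hb]
    have hwb0 : ω * β ≠ 0 := mul_ne_zero hw0 hb0
    have hw2b0 : ω ^ 2 * β ≠ 0 := mul_ne_zero (pow_ne_zero _ hw0) hb0
    have hset : {y : GaloisField 2 (2 * m) | y ^ 3 + y + a = 0}
        = {β + β⁻¹, ω * β + (ω * β)⁻¹, ω ^ 2 * β + (ω ^ 2 * β)⁻¹} := by
      ext y
      simp only [Set.mem_setOf_eq, Set.mem_insert_iff, Set.mem_singleton_iff]
      constructor
      · intro hy
        obtain ⟨u, hu0, hu, hcase⟩ := root_to_u y hy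
        obtain ⟨w', hw'0, hw'3, hyw⟩ : ∃ w' : GaloisField 2 (2 * m),
            w' ≠ 0 ∧ w' ^ 3 = t₁ ∧ y = w' + w'⁻¹ := by
          rcases hcase with h | h
          · exact ⟨u, hu0, h, u_to_y y u hu0 hu⟩
          · refine ⟨u⁻¹, inv_ne_zero hu0, ?_, ?_⟩
            · rw [inv_pow, h, inv_inv]
            · rw [u_to_y y u hu0 hu, inv_inv, add_comm]
        have hz3 : (w' * β⁻¹) ^ 3 = 1 := by
          rw [mul_pow, inv_pow, hw'3, hb, mul_inv_cancel₀ ht0]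
        rcases cube_roots _ hz3 with h | h | h
        · left
          have hw'β : w' = β := by
            field_simp at h; exact h
          rw [hyw, hw'β]
        · right; left
          have hw'β : w' = ω * β := by
            field_simp at h; linear_combination h
          rw [hyw, hw'β]
        · right; right
          have hw'β : w' = ω ^ 2 * β := by
            field_simp at h; linear_combination h
          rw [hyw, hw'β]
      · rintro (rfl | rfl | rfl)
        · exact cube_to_root β hb
        · exact cube_to_root _ hb1
        · exact cube_to_root _ hb2
    rw [hset]
    refine Set.ncard_eq_three.mpr ⟨_, _, _, ?_, ?_, ?_, rfl⟩
    · intro hEq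
      have h := gdist _ _ hb0 hwb0 hb hb1 hEq
      apply hw1
      have := mul_right_cancel₀ hb0 (show (1 : GaloisField 2 (2 * m)) * β = ω * β by
        rw [one_mul]; exact h)
      exact this.symm
    · intro hEq
      have h := gdist _ _ hb0 hw2b0 hb hb2 hEq
      apply hw2ne1
      have := mul_right_cancel₀ hb0 (show (1 : GaloisField 2 (2 * m)) * β = ω ^ 2 * β by
        rw [one_mul]; exact h)
      exact this.symm
    · intro hEq
      have h := gdist _ _ hwb0 hw2b0 hb1 hb2 hEq
      have hww : ω = ω ^ 2 := by
        have := mul_right_cancel₀ hb0 h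
        exact this
      apply hw2ne1
      calc ω ^ 2 = ω * ω := by ring
        _ = ω ^ 2 * ω := by rw [← hww]
        _ = ω ^ 3 := by ring
        _ = 1 := hw3
  constructor
  · exact not_congr iff1
  · constructor
    · intro h3
      apply iff1.1
      have hne : {y : GaloisField 2 (2 * m) | y ^ 3 + y + a = 0}.Nonempty :=
        Set.nonempty_of_ncard_ne_zero (by rw [h3]; norm_num)
      obtain ⟨y, hy⟩ := hne
      exact ⟨y, hy⟩
    · exact count
end

section
/- Let n = 2m with m odd, q = 2^m, and x ∈ F_{2^n} \ {0, 1}. Set h = x + x^q and c = x + x^2, and let A = c^{2-2q}(h + c + c^2), B = c + c^2. If c is a non-cube in F_{2^n}, then the equation A y^3 + B y^2 + B^q y + A^q = 0 has no solutions y ∈ F_{2^n}. -/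
private lemma pow2_add_aux {K : Type*} [CommRing K] (h2 : (2:K) = 0) :
    ∀ (k : ℕ) (a b : K), (a + b) ^ 2 ^ k = a ^ 2 ^ k + b ^ 2 ^ k := by
  intro k
  induction k with
  | zero => intro a b; simp
  | succ k ih =>
    intro a b
    rw [pow_succ, pow_mul, pow_mul, pow_mul, ih a b]
    linear_combination (a ^ 2 ^ k * b ^ 2 ^ k) * h2

private lemma two_pow_even_mod3 : ∀ k : ℕ, ∃ t, 2 ^ (2 * k) = 3 * t + 1 := by
  intro k
  induction k with
  | zero => exact ⟨0, rfl⟩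
  | succ k ih =>
    obtain ⟨t, ht⟩ := ih
    refine ⟨4 * t + 1, ?_⟩
    rw [show 2 * (k+1) = 2 * k + 2 by ring, pow_add, ht]
    ring

theorem stmt_15 (m : ℕ) (hm : 0 < m) (hodd : Odd m)
    (x : GaloisField 2 (2 * m)) (hx0 : x ≠ 0) (hx1 : x ≠ 1) :
    let q := 2 ^ m
    let h := x + x ^ q
    let c := x + x ^ 2
    let A := c ^ 2 / c ^ (2 * q) * (h + c + c ^ 2)
    let B := c + c ^ 2
    (¬ ∃ β : GaloisField 2 (2 * m), β ^ 3 = c) →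
      ∀ y : GaloisField 2 (2 * m),
        A * y ^ 3 + B * y ^ 2 + B ^ q * y + A ^ q ≠ 0 := by
  intro q hS cS AS BS hnc y heq
  apply hnc
  haveI : Fintype (GaloisField 2 (2 * m)) := Fintype.ofFinite _
  have htwo : (2 : GaloisField 2 (2 * m)) = 0 := by
    exact_mod_cast CharP.cast_eq_zero (GaloisField 2 (2 * m)) 2
  have hcard : Fintype.card (GaloisField 2 (2 * m)) = 2 ^ (2 * m) := by
    rw [← Nat.card_eq_fintype_card]
    exact GaloisField.card 2 (2 * m) (by omega)
  have hqadd : ∀ a b : GaloisField 2 (2 * m), (a + b) ^ q = a ^ q + b ^ q := fun a b =>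
    pow2_add_aux htwo m a b
  have hfix : ∀ a : GaloisField 2 (2 * m), (a ^ q) ^ q = a := by
    intro a
    rw [← pow_mul]
    have e : q * q = 2 ^ (2 * m) := by
      show 2 ^ m * 2 ^ m = 2 ^ (2 * m)
      rw [← pow_add]
      congr 1
      omega
    rw [e, ← hcard]
    exact FiniteField.pow_card a
  have hqn : ∀ (a : GaloisField 2 (2 * m)) (n : ℕ), (a ^ n) ^ q = (a ^ q) ^ n := by
    intro a n
    rw [← pow_mul, Nat.mul_comm n q, pow_mul]
  obtain ⟨u, hud⟩ : ∃ t : GaloisField 2 (2 * m), t = x ^ q := ⟨_, rfl⟩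
  obtain ⟨c, hcd⟩ : ∃ t : GaloisField 2 (2 * m), t = x + x ^ 2 := ⟨_, rfl⟩
  obtain ⟨h, hhd⟩ : ∃ t : GaloisField 2 (2 * m), t = x + u := ⟨_, rfl⟩
  obtain ⟨d, hdd⟩ : ∃ t : GaloisField 2 (2 * m), t = u + u ^ 2 := ⟨_, rfl⟩
  have hxq : x ^ q = u := hud.symm
  have huq : u ^ q = x := by rw [hud]; exact hfix x
  have hd : d = c + h + h ^ 2 := by
    rw [hdd, hcd, hhd]
    linear_combination (-(x + x * u + x ^ 2)) * htwo
  have hcq : c ^ q = d := by rw [hcd, hdd, hqadd, hqn, hxq]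
  have hhq : h ^ q = h := by rw [hhd, hqadd, hxq, huq]; ring
  have hdq : d ^ q = c := by rw [hdd, hcd, hqadd, hqn, huq]
  have hx1' : x + 1 ≠ 0 := by
    intro hx
    apply hx1
    linear_combination hx - htwo
  have hc0 : c ≠ 0 := by
    rw [hcd]
    intro hcc
    rcases mul_eq_zero.mp (show x * (x + 1) = 0 by linear_combination hcc) with h' | h'
    · exact hx0 h'
    · exact hx1' h'
  have hd0 : d ≠ 0 := by
    rw [← hcq]
    exact pow_ne_zero q hc0
  have ecS : cS = c := by rw [hcd]
  have ehS : hS = h := by rw [hhd, hud]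
  have eAS : AS = cS ^ 2 / cS ^ (2 * q) * (hS + cS + cS ^ 2) := rfl
  have eBS : BS = cS + cS ^ 2 := rfl
  rw [eAS, eBS, ecS, ehS] at heq
  have hc2q : c ^ (2 * q) = d ^ 2 := by
    rw [Nat.mul_comm 2 q, pow_mul, hcq]
  have hBq : (c + c ^ 2) ^ q = d + d ^ 2 := by rw [hqadd, hqn, hcq]
  have hAq : (c ^ 2 / d ^ 2 * (h + c + c ^ 2)) ^ q = d ^ 2 / c ^ 2 * (h + d + d ^ 2) := by
    rw [mul_pow, div_pow, hqadd, hqadd, hqn, hqn, hhq, hcq, hdq]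
  rw [hc2q, hBq, hAq] at heq
  obtain ⟨j, hj⟩ := hodd
  obtain ⟨t, ht⟩ : ∃ t, 2 ^ (m + 1) = 3 * t + 1 := by
    obtain ⟨t, ht⟩ := two_pow_even_mod3 (j + 1)
    refine ⟨t, ?_⟩
    rw [← ht]
    congr 1
    omega
  have hpow2 : ∀ a : GaloisField 2 (2 * m), a ^ 2 ^ (m + 1) = (a ^ q) ^ 2 := by
    intro a
    have e : (2:ℕ) ^ (m + 1) = q * 2 := by rw [pow_succ]
    rw [e, pow_mul]
  by_cases hh0 : h = 0
  · -- x is in F_q, so c ^ q = c and c has an explicit cube root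
    have hcc : c ^ q = c := by rw [hcq, hd, hh0]; ring
    have h1 : (c ^ t) ^ 3 * c = c * c := by
      rw [← pow_mul, ← pow_succ, show t * 3 + 1 = 3 * t + 1 by ring, ← ht, hpow2, hcc]
      ring
    have h2 := mul_right_cancel₀ hc0 h1
    exact ⟨c ^ t, by rw [ecS]; exact h2⟩
  by_cases hX0 : h + c + c ^ 2 = 0
  · -- degenerate case: c = 1
    have hc4 : d = c ^ 4 := by
      rw [hd]
      linear_combination (1 + h - c - c ^ 2) * hX0 + c ^ 3 * htwo
    have hq4 : c ^ q = c ^ 4 := by rw [hcq, hc4]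
    have hc16 : c ^ 16 = c := by
      have h0 := hfix c
      rw [hq4, hqn, hq4] at h0
      rw [show (16:ℕ) = 4 * 4 by norm_num, pow_mul]
      exact h0
    have key : ∀ i : ℕ, c ^ 2 ^ (2 * i + 1) = c ^ 2 ∨ c ^ 2 ^ (2 * i + 1) = c ^ 8 := by
      intro i
      induction i with
      | zero => left; norm_num
      | succ n ih =>
        have e : (2:ℕ) ^ (2 * (n + 1) + 1) = 2 ^ (2 * n + 1) * 4 := by
          rw [show 2 * (n + 1) + 1 = (2 * n + 1) + 2 by ring, pow_add]
          norm_num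
        rcases ih with h' | h'
        · right
          rw [e, pow_mul, h']
          ring
        · left
          rw [e, pow_mul, h', show ((c:GaloisField 2 (2*m)) ^ 8) ^ 4 = (c ^ 16) ^ 2 by ring,
            hc16]
    have hqm : c ^ 2 ^ (2 * j + 1) = c ^ 4 := by
      rw [← hj]
      exact hq4
    have hc1 : c = 1 := by
      rcases key j with h' | h'
      · have hcc : c ^ 4 = c ^ 2 := by rw [← hqm]; exact h'
        have h5 : (c * (c + 1)) ^ 2 = 0 := by
          linear_combination hcc + (c ^ 2 + c ^ 3) * htwo
        have h6 : c * (c + 1) = 0 := pow_eq_zero_iff (by norm_num) |>.mp h5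
        rcases mul_eq_zero.mp h6 with h7 | h7
        · exact absurd h7 hc0
        · linear_combination h7 - htwo
      · have hcc : c ^ 4 = c ^ 8 := by rw [← hqm]; exact h'
        have h5 : (c * (c + 1)) ^ 4 = 0 := by
          linear_combination (-1 : GaloisField 2 (2*m)) * hcc +
            (c ^ 4 + 2 * c ^ 5 + 3 * c ^ 6 + 2 * c ^ 7) * htwo
        have h6 : c * (c + 1) = 0 := pow_eq_zero_iff (by norm_num) |>.mp h5
        rcases mul_eq_zero.mp h6 with h7 | h7
        · exact absurd h7 hc0
        · linear_combination h7 - htwo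
    exact ⟨1, by rw [ecS, hc1]; norm_num⟩
  -- main case: h ≠ 0 and h + c + c^2 ≠ 0
  obtain ⟨Zp, hZp⟩ : ∃ t : GaloisField 2 (2*m),
      t = c ^ 2 * (h + c + c ^ 2) * y + d ^ 2 * (c + c ^ 2) := ⟨_, rfl⟩
  obtain ⟨Pp, hPp⟩ : ∃ t : GaloisField 2 (2*m),
      t = c ^ 2 * d ^ 3 * h ^ 2 * (c + h) := ⟨_, rfl⟩
  obtain ⟨Rp, hRp⟩ : ∃ t : GaloisField 2 (2*m),
      t = d ^ 4 * c ^ 2 * (h + c + c ^ 2) * h ^ 5 := ⟨_, rfl⟩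
  obtain ⟨Om, hOm⟩ : ∃ t : GaloisField 2 (2*m),
      t = c ^ 4 * d ^ 5 * h ^ 3 := ⟨_, rfl⟩
  obtain ⟨Z0, hZ0⟩ : ∃ t : GaloisField 2 (2*m),
      t = c ^ 2 / d ^ 2 * (h + c + c ^ 2) * y + (c + c ^ 2) := ⟨_, rfl⟩
  obtain ⟨p0, hp0⟩ : ∃ t : GaloisField 2 (2*m),
      t = (c + c ^ 2) ^ 2 + c ^ 2 / d ^ 2 * (h + c + c ^ 2) * (d + d ^ 2) := ⟨_, rfl⟩
  obtain ⟨r0, hr0⟩ : ∃ t : GaloisField 2 (2*m),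
      t = c ^ 2 / d ^ 2 * (h + c + c ^ 2) *
        ((c ^ 2 / d ^ 2 * (h + c + c ^ 2)) * (d ^ 2 / c ^ 2 * (h + d + d ^ 2)) +
          (c + c ^ 2) * (d + d ^ 2)) := ⟨_, rfl⟩
  have hcub0 : Z0 ^ 3 + p0 * Z0 + r0 = 0 := by
    rw [hZ0, hp0, hr0]
    linear_combination ((c ^ 2 / d ^ 2 * (h + c + c ^ 2)) ^ 2) * heq +
      ((c + c ^ 2) ^ 3 +
        (c ^ 2 / d ^ 2 * (h + c + c ^ 2)) * (c + c ^ 2) * (d + d ^ 2) +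
        2 * (c ^ 2 / d ^ 2 * (h + c + c ^ 2)) * (c + c ^ 2) ^ 2 * y +
        (c ^ 2 / d ^ 2 * (h + c + c ^ 2)) ^ 2 * (c + c ^ 2) * y ^ 2) * htwo
  have hZZ : d ^ 2 * Z0 = Zp := by
    rw [hZ0, hZp]
    field_simp
  have hS2 : d ^ 2 * (c + c ^ 2) ^ 2 + c ^ 2 * (h + c + c ^ 2) * (d + d ^ 2)
      = c ^ 2 * h ^ 2 * (c + h) * d := by
    linear_combination
      (2*c^2*h + 2*c^2*h^2 + c^2*d + c^2*d*h + 2*c^3 + 4*c^3*h + 2*c^3*h^2 + 3*c^3*d +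
        4*c^4 + 2*c^4*h + 2*c^4*h^2 + 2*c^4*d + 2*c^5) * hd +
      (c^2*h^2 + 2*c^2*h^3 + c^2*h^4 + 2*c^3*h + 4*c^3*h^2 + 3*c^3*h^3 + c^3*h^4 + c^4 +
        4*c^4*h + 4*c^4*h^2 + 2*c^4*h^3 + c^4*h^4 + 2*c^5 + 2*c^5*h + 2*c^5*h^2 + c^6) * htwo
  have hPP : d ^ 4 * p0 = Pp := by
    have step : d ^ 4 * p0
        = d ^ 2 * (d ^ 2 * (c + c ^ 2) ^ 2 + c ^ 2 * (h + c + c ^ 2) * (d + d ^ 2)) := by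
      rw [hp0]
      field_simp
    rw [step, hS2, hPp]
    ring
  have hABp : (h + c + c ^ 2) * (h + d + d ^ 2) + (c + c ^ 2) * (d + d ^ 2) = h ^ 5 := by
    linear_combination
      (h + h^2 + h^3 + d*h + 2*c + 3*c*h + 2*c*h^2 + 2*c*d + 4*c^2 + 2*c^2*h + 2*c^2*h^2 +
        2*c^2*d + 2*c^3) * hd +
      (h^2 + h^3 + h^4 + 2*c*h + 3*c*h^2 + 3*c*h^3 + c*h^4 + c^2 + 4*c^2*h + 4*c^2*h^2 +
        2*c^2*h^3 + c^2*h^4 + 2*c^3 + 2*c^3*h + 2*c^3*h^2 + c^4) * htwo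
  have hRR : d ^ 6 * r0 = Rp := by
    have step : d ^ 6 * r0 = d ^ 4 * c ^ 2 * (h + c + c ^ 2) *
        ((h + c + c ^ 2) * (h + d + d ^ 2) + (c + c ^ 2) * (d + d ^ 2)) := by
      rw [hr0]
      field_simp
    rw [step, hABp, hRp]
  have hcubP : Zp ^ 3 + Pp * Zp + Rp = 0 := by
    rw [← hZZ, ← hPP, ← hRR]
    linear_combination (d ^ 6) * hcub0
  have hS3 : c ^ 2 * d + h ^ 2 * (h + c + c ^ 2) + (c + h) ^ 3 = 0 := by
    linear_combination (c ^ 2) * hd +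
      (h^3 + 2*c*h^2 + 2*c^2*h + c^2*h^2 + c^3) * htwo
  have hresP : Om ^ 2 + Rp * Om + Pp ^ 3 = 0 := by
    rw [hOm, hRp, hPp]
    linear_combination (c ^ 6 * d ^ 9 * h ^ 6) * hS3
  have hRp0 : Rp ≠ 0 := by
    rw [hRp]
    exact mul_ne_zero (mul_ne_zero (mul_ne_zero (pow_ne_zero 4 hd0) (pow_ne_zero 2 hc0)) hX0)
      (pow_ne_zero 5 hh0)
  have hZP0 : Zp ^ 2 + Pp ≠ 0 := by
    intro HH
    apply hRp0
    linear_combination hcubP - Zp * HH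
  have hkey : (Om + Pp * Zp) ^ 3 = Om * (Zp ^ 2 + Pp) ^ 3 := by
    linear_combination (Om + Rp + Pp * Zp) * hresP + (Pp ^ 3 + Om * Zp ^ 3 + Om * Rp) * hcubP +
      (-(Pp^3*Rp) - Pp^4*Zp - Om*Zp^6 - Om*Rp*Zp^3 - Om*Rp^2 - 2*Om*Pp*Zp^4 - Om*Pp*Rp*Zp -
        Om*Pp^3 - Om^2*Rp + Om^2*Pp*Zp) * htwo
  obtain ⟨ρ, hρd⟩ : ∃ t : GaloisField 2 (2*m), t = (Om + Pp * Zp) / (Zp ^ 2 + Pp) := ⟨_, rfl⟩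
  have hρ3 : ρ ^ 3 = Om := by
    rw [hρd, div_pow, hkey, mul_div_assoc, div_self (pow_ne_zero 3 hZP0), mul_one]
  have hOm0 : Om ≠ 0 := by
    rw [hOm]
    exact mul_ne_zero (mul_ne_zero (pow_ne_zero 4 hc0) (pow_ne_zero 5 hd0)) (pow_ne_zero 3 hh0)
  have hρ0 : ρ ≠ 0 := by
    intro H
    apply hOm0
    rw [← hρ3, H]
    ring
  have hOmq : Om ^ q = d ^ 4 * c ^ 5 * h ^ 3 := by
    rw [hOm, mul_pow, mul_pow, hqn, hqn, hqn, hcq, hdq, hhq]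
  have hρq3 : (ρ ^ q) ^ 3 = d ^ 4 * c ^ 5 * h ^ 3 := by
    rw [← hqn, hρ3, hOmq]
  have hρq0 : ρ ^ q ≠ 0 := pow_ne_zero q hρ0
  obtain ⟨κ, hκd⟩ : ∃ t : GaloisField 2 (2*m), t = ρ / ρ ^ q := ⟨_, rfl⟩
  have hOmq0 : (d ^ 4 * c ^ 5 * h ^ 3 : GaloisField 2 (2*m)) ≠ 0 :=
    mul_ne_zero (mul_ne_zero (pow_ne_zero 4 hd0) (pow_ne_zero 5 hc0)) (pow_ne_zero 3 hh0)
  have hκ3 : κ ^ 3 = d / c := by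
    rw [hκd, div_pow, hρ3, hρq3, hOm, div_eq_div_iff hOmq0 hc0]
    ring
  have hκ0 : κ ≠ 0 := by
    rw [hκd]
    exact div_ne_zero hρ0 hρq0
  obtain ⟨σ, hσd⟩ : ∃ t₀ : GaloisField 2 (2*m), t₀ = (c * d) ^ t := ⟨_, rfl⟩
  have hσ3 : σ ^ 3 = c * d := by
    have h1 : σ ^ 3 * (c * d) = (c * d) * (c * d) := by
      rw [hσd, ← pow_mul, ← pow_succ, show t * 3 + 1 = 3 * t + 1 by ring, ← ht, hpow2,
        mul_pow, hcq, hdq]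
      ring
    exact mul_right_cancel₀ (mul_ne_zero hc0 hd0) h1
  obtain ⟨β, hβd⟩ : ∃ t₀ : GaloisField 2 (2*m), t₀ = σ ^ 2 / (κ ^ 2 * c) := ⟨_, rfl⟩
  have hβ3 : β ^ 3 = c := by
    have h1 : β ^ 3 = (σ ^ 3) ^ 2 / ((κ ^ 3) ^ 2 * c ^ 3) := by
      rw [hβd]
      ring
    rw [h1, hσ3, hκ3]
    field_simp
  exact ⟨β, by rw [ecS]; exact hβ3⟩
end

section
/- Let n = 2m with m odd, q = 2^m, and x ∈ F_{2^n} \ {0, 1}. Set h = x + x^q, c = x + x^2, A = (h + c + c^2)/c^q, B = 1 + c. If c is a non-cube in F_{2^n}, then the equation A y^3 + B y^2 + B^q y + A^q = 0 has no solutions y ∈ F_{2^n}. -/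
theorem aux_dvd1 (m : ℕ) (hodd : Odd m) : 3 ∣ 2^m + 1 := by
  obtain ⟨k, hk⟩ := hodd
  subst hk
  induction k with
  | zero => decide
  | succ n ih =>
    have hp : 2^(2*(n+1)+1) = 4 * 2^(2*n+1) := by
      rw [show 2*(n+1)+1 = (2*n+1)+2 from by ring, pow_add]; ring
    obtain ⟨t, ht⟩ := ih
    rw [hp]
    generalize hgen : 2^(2*n+1) = a at ht ⊢
    omega

set_option maxHeartbeats 1000000 in
theorem stmt_16 (m : ℕ) (hm : 0 < m) (hodd : Odd m)
    (x : GaloisField 2 (2 * m)) (hx0 : x ≠ 0) (hx1 : x ≠ 1) :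
    let q := 2 ^ m
    let h := x + x ^ q
    let c := x + x ^ 2
    let A := (h + c + c ^ 2) / c ^ q
    let B := 1 + c
    (¬ ∃ β : GaloisField 2 (2 * m), β ^ 3 = c) →
      ∀ y : GaloisField 2 (2 * m),
        A * y ^ 3 + B * y ^ 2 + B ^ q * y + A ^ q ≠ 0 := by
  intro q h c A B hnc y hy
  simp only [q, h, c, A, B] at hy hnc
  haveI : Fintype (GaloisField 2 (2*m)) := Fintype.ofFinite _
  have htwo : (2 : GaloisField 2 (2*m)) = 0 := by
    have := CharP.cast_eq_zero (GaloisField 2 (2*m)) 2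
    exact_mod_cast this
  have hcardK : ∀ a : GaloisField 2 (2*m), a ^ (2^(2*m)) = a := by
    intro a
    have hc : Fintype.card (GaloisField 2 (2*m)) = 2^(2*m) := by
      rw [← Nat.card_eq_fintype_card]; exact GaloisField.card 2 (2*m) (by omega)
    rw [← hc]; exact FiniteField.pow_card a
  have hfrob : ∀ a b : GaloisField 2 (2*m), (a+b)^(2^m) = a^(2^m) + b^(2^m) :=
    fun a b => add_pow_char_pow a b 2 m
  obtain ⟨s, hs_def⟩ : ∃ s, s = x ^ (2^m) := ⟨_, rfl⟩
  rw [← hs_def] at hy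
  have hsq : s^(2^m) = x := by
    rw [hs_def, ← pow_mul, ← pow_add, ← two_mul]; exact hcardK x
  have hcq : (x+x^2)^(2^m) = s + s^2 := by
    rw [hfrob x (x^2), hs_def, pow_right_comm]
  have hcsq : (s+s^2)^(2^m) = x + x^2 := by
    rw [hfrob s (s^2), hsq, pow_right_comm, hsq]
  have heq : (s+x^4)^(2^m) = x + s^4 := by
    rw [hfrob, hsq, pow_right_comm, hs_def]
  have hc0 : x + x^2 ≠ 0 := by
    intro hcz
    rcases mul_eq_zero.mp (show x*(1+x) = 0 by linear_combination hcz) with h' | h'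
    · exact hx0 h'
    · exact hx1 (by linear_combination -h' + x*htwo)
  have hcs0 : s + s^2 ≠ 0 := by
    intro h'
    exact hc0 (by rw [← hcsq, h']; exact zero_pow (by positivity))
  have hAnum : x + s + (x+x^2) + (x+x^2)^2 = s + x^4 := by
    linear_combination (x+x^2+x^3)*htwo
  have hBq : (1+(x+x^2))^(2^m) = 1+(s+s^2) := by rw [hfrob, one_pow, hcq]
  have hAq : ((s+x^4)/(s+s^2))^(2^m) = (x+s^4)/(x+x^2) := by
    rw [div_pow, heq, hcsq]
  rw [hAnum, hcq, hBq, hAq] at hy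
  have hE : (x+x^2)*(s+x^4)*y^3 + (1+x+x^2)*(x+x^2)*(s+s^2)*y^2
      + (1+s+s^2)*(x+x^2)*(s+s^2)*y + (s+s^2)*(x+s^4) = 0 := by
    have h1 : (s+x^4)/(s+s^2)*(s+s^2) = s+x^4 := div_mul_cancel₀ _ hcs0
    have h2 : (x+s^4)/(x+x^2)*(x+x^2) = x+s^4 := div_mul_cancel₀ _ hc0
    linear_combination (x+x^2)*(s+s^2)*hy - (x+x^2)*y^3*h1 - (s+s^2)*h2
  by_cases hxq : s = x
  · have hccq : (x+x^2)^(2^m) = x + x^2 := by rw [hcq, hxq]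
    obtain ⟨t, ht⟩ := aux_dvd1 m hodd
    apply hnc
    refine ⟨(x+x^2)^(2*t - 1), ?_⟩
    have hpow : ((x+x^2)^(2*t-1))^3 * (x+x^2) = (x+x^2) * (x+x^2) := by
      rw [← pow_mul, ← pow_succ]
      have h1 : (2*t-1)*3+1 = 2^m*2 := by omega
      rw [h1, pow_mul, hccq]; ring
    exact mul_right_cancel₀ hc0 hpow
  · have hh0 : x + s ≠ 0 := fun hz => hxq (by linear_combination -hz + s*htwo)
    have he0 : s + x^4 ≠ 0 := by
      intro hez
      have hsx4 : s = x^4 := by linear_combination -hez + s*htwo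
      have h16 : x^16 = x := by
        calc x^16 = (x^4)^4 := by ring
        _ = s^4 := by rw [← hsx4]
        _ = (x^(2^m))^4 := by rw [hs_def]
        _ = (x^4)^(2^m) := by rw [pow_right_comm]
        _ = s^(2^m) := by rw [← hsx4]
        _ = x := hsq
      have hiter : ∀ k : ℕ, x^(16^k) = x := by
        intro k; induction k with
        | zero => simp
        | succ n ih => rw [pow_succ, pow_mul, ih, h16]
      obtain ⟨k0, hk0⟩ := hodd
      have hbig : x^(2^(2*m+2)) = x := by
        have h2 : (16:ℕ)^(k0+1) = 2^(2*m+2) := by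
          subst hk0
          rw [show (16:ℕ) = 2^4 from rfl, ← pow_mul]
          ring_nf
        rw [← h2]; exact hiter (k0+1)
      have hx4 : x^4 = x := by
        have h3 : x^(2^(2*m+2)) = (x^(2^(2*m)))^4 := by
          rw [← pow_mul, show 2^(2*m+2) = 2^(2*m)*4 from by rw [pow_add]; ring]
        rw [h3, hcardK x] at hbig
        exact hbig
      exact hxq (by rw [hsx4, hx4])
    have heq0 : x + s^4 ≠ 0 := by rw [← heq]; exact pow_ne_zero _ he0
    obtain ⟨V, hV_def⟩ : ∃ V, V = (x+x^2)*((s+x^4)*y + (1+x+x^2)*(s+s^2)) := ⟨_, rfl⟩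
    obtain ⟨P, hP_def⟩ : ∃ P, P = (x+x^2)^2*(s+s^2)*(s+x^2)*(x+s)^2 := ⟨_, rfl⟩
    obtain ⟨Rr, hR_def⟩ : ∃ Rr, Rr = (x+x^2)^2*(s+x^4)*(s+s^2)*(x+s)^5 := ⟨_, rfl⟩
    obtain ⟨Zz, hZ_def⟩ : ∃ Zz, Zz = (x+x^2)^4*(s+s^2)^2*(x+s)^3 := ⟨_, rfl⟩
    have hV3 : V^3 + P*V + Rr = 0 := by
      rw [hV_def, hP_def, hR_def]
      linear_combination ((x+x^2)^2*(s+x^4)^2)*hE + (x^3*s^3*y + x^3*s^3*y^2 + x^3*s^4 + 2*x^3*s^4*y + x^3*s^4*y^2 + 2*x^3*s^5 + x^3*s^5*y + 4*x^3*s^6 + 3*x^3*s^7 + 2*x^4*s^3 + 6*x^4*s^3*y + 4*x^4*s^3*y^2 + 9*x^4*s^4 + 13*x^4*s^4*y + 4*x^4*s^4*y^2 + 18*x^4*s^5 + 7*x^4*s^5*y + 18*x^4*s^6 + 7*x^4*s^7 + 9*x^5*s^3 + 17*x^5*s^3*y + 7*x^5*s^3*y^2 + 37*x^5*s^4 + 37*x^5*s^4*y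 + 7*x^5*s^4*y^2 + 55*x^5*s^5 + 20*x^5*s^5*y + 33*x^5*s^6 + 6*x^5*s^7 + 23*x^6*s^3 + 29*x^6*s^3*y + 7*x^6*s^3*y^2 + 80*x^6*s^4 + 60*x^6*s^4*y + 7*x^6*s^4*y^2 + 92*x^6*s^5 + 31*x^6*s^5*y + 38*x^6*s^6 + 3*x^6*s^7 + x^7*s^2*y + 2*x^7*s^2*y^2 + 37*x^7*s^3 + 33*x^7*s^3*y + 6*x^7*s^3*y^2 + 108*x^7*s^4 + 61*x^7*s^4*y + 4*x^7*s^4*y^2 + 110*x^7*s^5 + 29*x^7*s^5*y + 40*x^7*s^6 + x^7*s^7 + x^8*s^2 + 6*x^8*s^2*y + 8*x^8*s^2*y^2 + 40*x^8*s^3 + 33*x^8*s^3*y + 9*x^8*s^3*y^2 + 110*x^8*s^4 + 44*x^8*s^4*y + x^8*s^4*y^2 + 108*x^8*s^5 + 17*x^8*s^5*y + 37*x^8*s^6 + 3*x^9*s^2 + 17*x^9*s^2*y + 14*x^9*s^2*y^2 + 38*x^9*s^3 + 44*x^9*s^3*y + 14*x^9*s^3*y^2 + 92*x^9*s^4 +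 33*x^9*s^4*y + 80*x^9*s^5 + 6*x^9*s^5*y + 23*x^9*s^6 + 6*x^10*s^2 + 29*x^10*s^2*y + 14*x^10*s^2*y^2 + 33*x^10*s^3 + 61*x^10*s^3*y + 14*x^10*s^3*y^2 + 55*x^10*s^4 + 33*x^10*s^4*y + 37*x^10*s^5 + x^10*s^5*y + 9*x^10*s^6 + x^11*s*y^2 + 7*x^11*s^2 + 31*x^11*s^2*y + 9*x^11*s^2*y^2 + 18*x^11*s^3 + 60*x^11*s^3*y + 8*x^11*s^3*y^2 + 18*x^11*s^4 + 29*x^11*s^4*y + 9*x^11*s^5 + 2*x^11*s^6 + 4*x^12*s*y^2 + 3*x^12*s^2 + 20*x^12*s^2*y + 6*x^12*s^2*y^2 + 4*x^12*s^3 + 37*x^12*s^3*y + 2*x^12*s^3*y^2 + 2*x^12*s^4 + 17*x^12*s^4*y + x^12*s^5 + 7*x^13*s*y^2 + 7*x^13*s^2*y + 7*x^13*s^2*y^2 + 13*x^13*s^3*y + 6*x^13*s^4*y + 7*x^14*s*y^2 + x^14*s^2*y + 7*x^14*s^2*y^2 + 2*x^14*s^3*y + x^14*s^4*y + 4*x^15*s*y^2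 + 4*x^15*s^2*y^2 + x^16*s*y^2 + x^16*s^2*y^2)*htwo
    have hR0 : Rr ≠ 0 := by
      rw [hR_def]
      exact mul_ne_zero (mul_ne_zero (mul_ne_zero (pow_ne_zero _ hc0) he0) hcs0) (pow_ne_zero _ hh0)
    have hD0 : V^2 + P ≠ 0 := fun hvp => hR0 (by linear_combination hV3 - V*hvp)
    obtain ⟨z, hz_def⟩ : ∃ z, z = (Zz + P*V)/(V^2+P) := ⟨_, rfl⟩
    have hzD : (V^2+P)*z = Zz + P*V := by
      rw [hz_def, ← mul_div_assoc]; exact mul_div_cancel_left₀ _ hD0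
    have hZq : Zz^2 + Rr*Zz + P^3 = 0 := by
      have hI2 : (x+x^2)^2*(s+s^2) + (s+x^4)*(x+s)^2 + (s+x^2)^3 = 0 := by
        linear_combination (s^3 + x*s^2 + x^2*s + 2*x^2*s^2 + x^3*s + x^3*s^2 + 2*x^4*s + x^4*s^2 + x^5*s + x^6)*htwo
      rw [hZ_def, hR_def, hP_def]
      linear_combination ((x+x^2)^6*(s+s^2)^3*(x+s)^6)*hI2
    have hnum : (Zz+P*V)^2 + V*(Zz+P*V)*(V^2+P) + P*(V^2+P)^2 = 0 := by
      linear_combination Zz*hV3 + hZq + (Zz*P*V + 2*P^2*V^2 + P*V^4 - Rr*Zz)*htwo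
    have hz2 : z^2 + V*z + P = 0 := by
      have h0 : (V^2+P)^2*(z^2+V*z+P) = 0 := by
        linear_combination hnum + ((V^2+P)*z + (Zz+P*V) + V*(V^2+P))*hzD
      rcases mul_eq_zero.mp h0 with h'|h'
      · exact absurd (pow_eq_zero_iff (by norm_num) |>.mp h') hD0
      · exact h'
    have hz3 : z^3 = Zz := by
      linear_combination (z - V)*hz2 + hzD + (P*V - P*z)*htwo
    obtain ⟨κ, hκ_def⟩ : ∃ κ, κ = (x+x^2)^((2^m+1)/3) := ⟨_, rfl⟩
    have hκ : κ^3 = (s+s^2)*(x+x^2) := by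
      rw [hκ_def, ← pow_mul, Nat.div_mul_cancel (aux_dvd1 m hodd), pow_succ, hcq]
    obtain ⟨G, hG_def⟩ : ∃ G, G = (x+x^2)*(x+s)*κ := ⟨_, rfl⟩
    have hG0 : G ≠ 0 := by
      rw [hG_def, hκ_def]
      exact mul_ne_zero (mul_ne_zero hc0 hh0) (pow_ne_zero _ hc0)
    have hZG : Zz = (s+s^2)*G^3 := by
      rw [hG_def, hZ_def]
      linear_combination (-(s+s^2)*(x+x^2)^3*(x+s)^3)*hκ
    have hβ3 : (z/G)^3 = s+s^2 := by
      rw [div_pow, hz3, hZG]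
      exact mul_div_cancel_right₀ _ (pow_ne_zero _ hG0)
    apply hnc
    refine ⟨(z/G)^(2^m), ?_⟩
    calc ((z/G)^(2^m))^3 = ((z/G)^3)^(2^m) := pow_right_comm _ _ _
    _ = (s+s^2)^(2^m) := by rw [hβ3]
    _ = x + x^2 := hcsq
end

section
/- Let n = 2m with m odd, q = 2^m, x ∈ F_{2^n} \ {0, 1}, and set h = x + x^q, c = x + x^2, r = x^{q+1}, A = c^{2-2q}(h + c + c^2), B = c + c^2, D = A(A^{q+1} + B^{q+1}), H = A^2(A^q B^3 + A B^{3q} + B^{2+2q}). Assume h ≠ 0. Then H/D^2 = u + u^2, where u = (h^2(r + r^2) + r + r^4 + h r^2)/h^5; in particular Tr^m_1(H/D^2) = 0. -/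
set_option maxHeartbeats 8000000 in
set_option maxRecDepth 100000 in
theorem stmt_17 (m : ℕ) (hm : 0 < m) (hodd : Odd m)
    (x : GaloisField 2 (2 * m)) (hx0 : x ≠ 0) (hx1 : x ≠ 1) :
    let q := 2 ^ m
    let h := x + x ^ q
    let c := x + x ^ 2
    let r := x ^ (q + 1)
    let A := c ^ 2 / c ^ (2 * q) * (h + c + c ^ 2)
    let B := c + c ^ 2
    let D := A * (A ^ (q + 1) + B ^ (q + 1))
    let H := A ^ 2 * (A ^ q * B ^ 3 + A * B ^ (3 * q) + B ^ (2 + 2 * q))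
    let u := (h ^ 2 * (r + r ^ 2) + r + r ^ 4 + h * r ^ 2) / h ^ 5
    h ≠ 0 →
      H / D ^ 2 = u + u ^ 2 ∧
        ∑ i ∈ Finset.range m, (H / D ^ 2) ^ (2 ^ i) = 0 := by
  intro q h c r A B D H u hne
  have h2 : (2 : GaloisField 2 (2 * m)) = 0 := by
    have := CharP.cast_eq_zero (GaloisField 2 (2 * m)) 2
    exact_mod_cast this
  -- squaring is injective
  have sqinj : ∀ a b : GaloisField 2 (2 * m), a ^ 2 = b ^ 2 → a = b := by
    intro a b hab
    have hz : (a - b) ^ 2 = 0 := by linear_combination hab + (b * b - a * b) * h2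
    exact sub_eq_zero.mp (pow_eq_zero_iff (n := 2) (by norm_num) |>.mp hz)
  -- Frobenius q-power is additive
  have padd : ∀ a b : GaloisField 2 (2 * m), (a + b) ^ q = a ^ q + b ^ q := by
    intro a b; exact add_pow_char_pow a b 2 m
  -- pow_card
  have pcard : ∀ a : GaloisField 2 (2 * m), (a ^ q) ^ q = a := by
    intro a
    haveI : Fintype (GaloisField 2 (2 * m)) := Fintype.ofFinite _
    have hcard : Fintype.card (GaloisField 2 (2 * m)) = 2 ^ (2 * m) := by
      rw [← Nat.card_eq_fintype_card]; exact GaloisField.card 2 (2 * m) (by omega)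
    have := FiniteField.pow_card a
    rw [hcard] at this
    calc (a ^ q) ^ q = a ^ (2 ^ m * 2 ^ m) := by rw [pow_mul]
      _ = a ^ (2 ^ (2 * m)) := by rw [← pow_add]; ring_nf
      _ = a := this

  -- name definitions
  obtain ⟨y, hyd⟩ : ∃ y, y = x ^ q := ⟨_, rfl⟩
  have hxq : x ^ q = y := hyd.symm
  have hyq : y ^ q = x := by rw [hyd]; exact pcard x
  have hcdef : c = x + x ^ 2 := rfl
  have hhdef : h = x + y := by rw [hyd]
  have hrdef : r = y * x := by
    show x ^ (q + 1) = y * x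
    rw [pow_succ, hxq]
  have hcq : c ^ q = y + y ^ 2 := by
    rw [hcdef, padd, hxq, pow_right_comm, hxq]
  have hcq' : (y + y ^ 2 : GaloisField 2 (2 * m)) ^ q = c := by
    rw [padd, hyq, pow_right_comm, hyq, hcdef]
  have hhq : h ^ q = h := by rw [hhdef, padd, hxq, hyq, add_comm]
  have hrq : r ^ q = r := by rw [hrdef, mul_pow, hxq, hyq]; exact mul_comm x y
  -- nonzeroness
  have hc0 : c ≠ 0 := by
    rw [hcdef]
    intro hcc
    have hxx : x * (1 + x) = 0 := by linear_combination hcc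
    rcases mul_eq_zero.mp hxx with hh | hh
    · exact hx0 hh
    · exact hx1 (by linear_combination hh - h2)
  have hcq0 : (y + y ^ 2 : GaloisField 2 (2 * m)) ≠ 0 := by
    rw [← hcq]; exact pow_ne_zero q hc0
  have hyx4 : y + x ^ 4 ≠ 0 := by
    intro hbad
    have hyx : y = x ^ 4 := by linear_combination hbad - x ^ 4 * h2
    have h16 : x ^ 16 = x := by
      conv_rhs => rw [← hyq, hyx, pow_right_comm, hxq, hyx]
      ring
    have per : ∀ k : ℕ, x ^ 2 ^ (k + 4) = x ^ 2 ^ k := by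
      intro k
      have : x ^ 2 ^ (k + 4) = (x ^ 16) ^ 2 ^ k := by
        rw [← pow_mul]; congr 1; rw [pow_add]; ring
      rw [this, h16]
    have key : ∀ k rr : ℕ, x ^ 2 ^ (4 * k + rr) = x ^ 2 ^ rr := by
      intro k
      induction k with
      | zero => intro rr; norm_num
      | succ n ih =>
        intro rr
        have e : 4 * (n + 1) + rr = (4 * n + rr) + 4 := by omega
        rw [e, per (4 * n + rr), ih rr]
    have hm4 : x ^ 2 ^ m = x ^ 2 ^ (m % 4) := by
      have hk4 := key (m / 4) (m % 4)
      rw [show 4 * (m / 4) + m % 4 = m from by omega] at hk4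
      exact hk4
    have hy2 : y = x ^ 2 ^ (m % 4) := by rw [hyd]; exact hm4
    obtain ⟨k, hk⟩ := hodd
    have : m % 4 = 1 ∨ m % 4 = 3 := by omega
    have hxx : x ^ 2 = x := by
      rcases this with hr1 | hr3
      · rw [hr1] at hy2
        have h42 : x ^ 4 = x ^ 2 := by rw [← hyx, hy2]; norm_num
        exact sqinj (x ^ 2) x (by linear_combination h42)
      · rw [hr3] at hy2
        have h48 : x ^ 4 = x ^ 8 := by rw [← hyx, hy2]; norm_num
        have h24 : x ^ 2 = x ^ 4 := sqinj (x ^ 2) (x ^ 4) (by linear_combination h48)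
        exact (sqinj x (x ^ 2) (by linear_combination h24)).symm
    rcases mul_eq_zero.mp (show x * (x - 1) = 0 by linear_combination hxx) with hh | hh
    · exact hx0 hh
    · exact hx1 (sub_eq_zero.mp hh)
  -- structural rewrites
  have hA : A = c ^ 2 / (y + y ^ 2) ^ 2 * (y + x ^ 4) := by
    show c ^ 2 / c ^ (2 * q) * (h + c + c ^ 2) = _
    rw [pow_mul' c 2 q, hcq]
    congr 1
    rw [hhdef, hcdef]
    linear_combination (x + x ^ 2 + x ^ 3) * h2
  have hAq : A ^ q = (y + y ^ 2) ^ 2 / c ^ 2 * (x + y ^ 4) := by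
    rw [hA, mul_pow, div_pow, pow_right_comm c 2 q, hcq, pow_right_comm (y + y ^ 2) 2 q, hcq',
      padd, hyq, pow_right_comm x 4 q, hxq]
  have hBq : B ^ q = y + y ^ 4 := by
    show (c + c ^ 2) ^ q = _
    rw [padd, hcq, pow_right_comm, hcq]
    linear_combination (y ^ 2 + y ^ 3) * h2
  have hB : B = x + x ^ 4 := by
    show c + c ^ 2 = _
    rw [hcdef]
    linear_combination (x ^ 2 + x ^ 3) * h2
  have hy0 : y ≠ 0 := fun h0 => hcq0 (by rw [h0]; ring)
  have hy1 : 1 + y ≠ 0 := fun h0 => hcq0 (by linear_combination y * h0)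
  have hx1' : 1 + x ≠ 0 := fun h0 => hc0 (by rw [hcdef]; linear_combination x * h0)
  have hDh : A ^ (q + 1) + B ^ (q + 1) = h ^ 5 := by
    rw [pow_succ, pow_succ, hAq, hA, hBq, hB, hhdef, hcdef]
    field_simp [hx0, hy0, hy1, hx1']
    linear_combination (x * y * 1 - x * y ^ 4 * 2 - x ^ 2 * y ^ 3 * 5 - x ^ 3 * y ^ 2 * 5 - x ^ 4 * y * 2 + x ^ 4 * y ^ 4 * 1) * h2
  have hA0 : A ≠ 0 := by
    rw [hA]
    exact mul_ne_zero (div_ne_zero (pow_ne_zero _ hc0) (pow_ne_zero _ hcq0)) hyx4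
  have hD : D = A * h ^ 5 := by
    show A * (A ^ (q + 1) + B ^ (q + 1)) = _
    rw [hDh]
  have hH : H = A ^ 2 * (A ^ q * B ^ 3 + A * (B ^ q) ^ 3 + B ^ 2 * (B ^ q) ^ 2) := by
    show A ^ 2 * (A ^ q * B ^ 3 + A * B ^ (3 * q) + B ^ (2 + 2 * q)) = _
    rw [pow_mul' B 3 q, pow_add, pow_mul' B 2 q]
  have hu : u = ((x + y) ^ 2 * (y * x + (y * x) ^ 2) + y * x + (y * x) ^ 4 + (x + y) * (y * x) ^ 2) / (x + y) ^ 5 := by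
    show (h ^ 2 * (r + r ^ 2) + r + r ^ 4 + h * r ^ 2) / h ^ 5 = _
    rw [hrdef, hhdef]
  have hne' : x + y ≠ 0 := by rw [← hhdef]; exact hne
  have hc0' : (x + x ^ 2 : GaloisField 2 (2 * m)) ≠ 0 := by rw [← hcdef]; exact hc0
  have hS : A ^ q * B ^ 3 + A * (B ^ q) ^ 3 + B ^ 2 * (B ^ q) ^ 2 = x * y ^ 6 + x * y ^ 8 + x ^ 2 * y ^ 2 + x ^ 2 * y ^ 5 + x ^ 2 * y ^ 6 + x ^ 2 * y ^ 7 + x ^ 2 * y ^ 8 + x ^ 2 * y ^ 9 + x ^ 3 * y ^ 6 + x ^ 3 * y ^ 8 + x ^ 4 * y ^ 5 + x ^ 4 * y ^ 7 + x ^ 4 * y ^ 8 + x ^ 4 * y ^ 9 + x ^ 5 * y ^ 2 + x ^ 5 * y ^ 4 + x ^ 5 * y ^ 6 + x ^ 5 * y ^ 8 + x ^ 6 * y + x ^ 6 * y ^ 2 + x ^ 6 * y ^ 3 + x ^ 6 * y ^ 5 + x ^ 7 * y ^ 2 + x ^ 7 * y ^ 4 + x ^ 8 * y + x ^ 8 *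 y ^ 2 + x ^ 8 * y ^ 3 + x ^ 8 * y ^ 4 + x ^ 8 * y ^ 5 + x ^ 8 * y ^ 8 + x ^ 9 * y ^ 2 + x ^ 9 * y ^ 4 := by
    rw [hAq, hA, hBq, hB, hcdef]
    field_simp [hx0, hy0, hy1, hx1']
    linear_combination (y * x * 1 + y * x ^ 2 * 2 + y * x ^ 3 * 3 + y * x ^ 4 * 4 - y * x ^ 6 * 3 - y * x ^ 7 * 2 - y * x ^ 8 * 3 - y * x ^ 9 * 2 + y ^ 2 * x * 2 + y ^ 2 * x ^ 4 * 7 - y ^ 2 * x ^ 6 * 4 + y ^ 2 * x ^ 7 * 1 - y ^ 2 * x ^ 8 * 4 - y ^ 2 * x ^ 9 * 3 + y ^ 2 * x ^ 10 * 1 + y ^ 3 * x * 3 + y ^ 3 * x ^ 4 * 9 + y ^ 3 * x ^ 6 * 2 + y ^ 3 * x ^ 7 * 13 + y ^ 3 * x ^ 8 * 1 - y ^ 3 * x ^ 9 * 2 + y ^ 3 * x ^ 10 * 2 + y ^ 4 * x * 4 + y ^ 4 * x ^ 2 * 7 + y ^ 4 * x ^ 3 * 9 + y ^ 4 * x ^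 4 * 12 + y ^ 4 * x ^ 5 * 2 - y ^ 4 * x ^ 6 * 2 + y ^ 4 * x ^ 7 * 2 - y ^ 4 * x ^ 8 * 4 - y ^ 4 * x ^ 9 * 3 + y ^ 4 * x ^ 10 * 1 + y ^ 5 * x ^ 4 * 2 + y ^ 5 * x ^ 5 * 4 + y ^ 5 * x ^ 6 * 2 + y ^ 6 * 1 - y ^ 6 * x * 3 - y ^ 6 * x ^ 2 * 4 + y ^ 6 * x ^ 3 * 2 - y ^ 6 * x ^ 4 * 2 + y ^ 6 * x ^ 5 * 2 + y ^ 6 * x ^ 6 * 12 + y ^ 6 * x ^ 7 * 9 + y ^ 6 * x ^ 8 * 7 + y ^ 6 * x ^ 9 * 4 + y ^ 7 * 2 - y ^ 7 * x * 2 + y ^ 7 * x ^ 2 * 1 + y ^ 7 * x ^ 3 * 13 + y ^ 7 * x ^ 4 * 2 + y ^ 7 * x ^ 6 * 9 + y ^ 7 * x ^ 9 * 3 + y ^ 8 * 1 - y ^ 8 * x * 3 - y ^ 8 * x ^ 2 * 4 + y ^ 8 * x ^ 3 * 1 - y ^ 8 * x ^ 4 * 4 + y ^ 8 * x ^ 6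 * 7 + y ^ 8 * x ^ 9 * 2 - y ^ 9 * x * 2 - y ^ 9 * x ^ 2 * 3 - y ^ 9 * x ^ 3 * 2 - y ^ 9 * x ^ 4 * 3 + y ^ 9 * x ^ 6 * 4 + y ^ 9 * x ^ 7 * 3 + y ^ 9 * x ^ 8 * 2 + y ^ 9 * x ^ 9 * 1 + y ^ 10 * x ^ 2 * 1 + y ^ 10 * x ^ 3 * 2 + y ^ 10 * x ^ 4 * 1 + x ^ 6 * 1 + x ^ 7 * 2 + x ^ 8 * 1) * h2
  have main : H / D ^ 2 = u + u ^ 2 := by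
    rw [hH, hS, hD, hu]
    rw [show (A * h ^ 5) ^ 2 = A ^ 2 * (h ^ 5) ^ 2 from by ring]
    rw [mul_div_mul_left _ _ (pow_ne_zero 2 hA0)]
    rw [hhdef]
    field_simp [hne', hx0, hy0, hy1, hx1']
    linear_combination (-(y * x ^ 3 * 1) - y * x ^ 4 * 2 - y * x ^ 6 * 3 - y ^ 2 * x ^ 2 * 2 - y ^ 2 * x ^ 3 * 6 - y ^ 2 * x ^ 4 * 3 - y ^ 2 * x ^ 5 * 11 - y ^ 2 * x ^ 6 * 4 - y ^ 2 * x ^ 7 * 3 - y ^ 3 * x * 1 - y ^ 3 * x ^ 2 * 6 - y ^ 3 * x ^ 3 * 5 - y ^ 3 * x ^ 4 * 20 - y ^ 3 * x ^ 5 * 12 - y ^ 3 * x ^ 6 * 11 - y ^ 4 * x * 2 - y ^ 4 * x ^ 2 * 3 - y ^ 4 * x ^ 3 * 20 - y ^ 4 * x ^ 4 * 18 - y ^ 4 * x ^ 5 * 20 - y ^ 4 * x ^ 6 * 3 - y ^ 4 * x ^ 7 * 2 - y ^ 5 * x ^ 2 * 11 - y ^ 5 * x ^ 3 * 12 - y ^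 5 * x ^ 4 * 20 - y ^ 5 * x ^ 5 * 5 - y ^ 5 * x ^ 6 * 6 - y ^ 5 * x ^ 7 * 1 - y ^ 6 * x * 3 - y ^ 6 * x ^ 2 * 4 - y ^ 6 * x ^ 3 * 11 - y ^ 6 * x ^ 4 * 3 - y ^ 6 * x ^ 5 * 6 - y ^ 6 * x ^ 6 * 2 - y ^ 7 * x ^ 2 * 3 - y ^ 7 * x ^ 4 * 2 - y ^ 7 * x ^ 5 * 1) * h2
  refine ⟨main, ?_⟩
  have hpow : ∀ (a : GaloisField 2 (2 * m)) (k : ℕ), (a ^ k) ^ q = (a ^ q) ^ k := fun a k =>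
    pow_right_comm a k q
  have huq : u ^ q = u := by
    rw [hu]
    simp only [div_pow, padd, mul_pow, hpow, hxq, hyq]
    ring
  have hstep : ∀ i : ℕ, (u + u ^ 2) ^ 2 ^ i = u ^ 2 ^ (i + 1) - u ^ 2 ^ i := by
    intro i
    have e1 : (u + u ^ 2) ^ 2 ^ i = u ^ 2 ^ i + (u ^ 2) ^ 2 ^ i := add_pow_char_pow u (u ^ 2) 2 i
    have e2 : (u ^ 2) ^ 2 ^ i = u ^ 2 ^ (i + 1) := by
      rw [← pow_mul]
      congr 1
      rw [pow_succ]
      ring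
    rw [e1, e2]
    linear_combination (u ^ 2 ^ i) * h2
  calc ∑ i ∈ Finset.range m, (H / D ^ 2) ^ 2 ^ i
      = ∑ i ∈ Finset.range m, (u ^ 2 ^ (i + 1) - u ^ 2 ^ i) := by
        refine Finset.sum_congr rfl fun i _ => ?_
        rw [main, hstep]
    _ = u ^ 2 ^ m - u ^ 2 ^ 0 := Finset.sum_range_sub (fun i => u ^ 2 ^ i) m
    _ = 0 := by
        have hq' : u ^ 2 ^ m = u := huq
        rw [hq', pow_zero, pow_one, sub_self]
end
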